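/- arXiv:1801.07597 — 9 statements merged into one kernel-verified Lean document; each statement's English description precedes it below -/
import Mathlib

section
/- Let $a_1,\ldots,a_n$ and $b_1,\ldots,b_n$ be real numbers with the $b_i$ distinct. Then the function $h(t) = a_1 t^{b_1} + \cdots + a_n t^{b_n}$ on $(0,\infty)$ is either identically zero or has at most $n-1$ zeroes in $(0,\infty)$. -/
open Real Set

/-- Rolle-based counting: if `f` has derivative `f'` on `(0,∞)` and all zeroes of `f'`
on `(0,∞)` lie in `S'`, then any finset of zeroes of `f` in `(0,∞)` has card `≤ S'.card + 1`. -/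
private lemma card_le_of_rolle {f f' : ℝ → ℝ}
    (hf : ∀ x ∈ Set.Ioi (0:ℝ), HasDerivAt f (f' x) x)
    (S' : Finset ℝ) (hS' : ∀ x ∈ Set.Ioi (0:ℝ), f' x = 0 → x ∈ S')
    (T : Finset ℝ) (hT : ∀ t ∈ T, t ∈ Set.Ioi (0:ℝ) ∧ f t = 0) :
    T.card ≤ S'.card + 1 := by
  by_contra hc
  push_neg at hc
  set m := T.card with hm
  have key : ∀ i : Fin (m - 1), ∃ c : ℝ,
      (T.orderIsoOfFin rfl ⟨i, by omega⟩ : ℝ) < c ∧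
      c < (T.orderIsoOfFin rfl ⟨(i : ℕ)+1, by omega⟩ : ℝ) ∧ f' c = 0 := by
    intro i
    have hilt : (i : ℕ) < m := by omega
    have hilt' : (i : ℕ) + 1 < m := by omega
    set x : ℝ := (T.orderIsoOfFin rfl ⟨i, hilt⟩ : ℝ) with hx
    set y : ℝ := (T.orderIsoOfFin rfl ⟨(i : ℕ)+1, hilt'⟩ : ℝ) with hy
    have hxy : x < y := by
      have h1 : T.orderIsoOfFin rfl ⟨i, hilt⟩ < T.orderIsoOfFin rfl ⟨(i : ℕ)+1, hilt'⟩ :=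
        (T.orderIsoOfFin rfl).strictMono (by simp [Fin.lt_def])
      exact_mod_cast h1
    obtain ⟨hx0, hfx⟩ := hT x (T.orderIsoOfFin rfl ⟨i, hilt⟩).2
    obtain ⟨hy0, hfy⟩ := hT y (T.orderIsoOfFin rfl ⟨(i : ℕ)+1, hilt'⟩).2
    have hsub : Set.Icc x y ⊆ Set.Ioi (0:ℝ) := fun z hz => lt_of_lt_of_le hx0 hz.1
    have hcont : ContinuousOn f (Set.Icc x y) := fun z hz =>
      ((hf z (hsub hz)).continuousAt).continuousWithinAt
    obtain ⟨c, hc1, hc2⟩ := exists_hasDerivAt_eq_zero hxy hcont (hfx.trans hfy.symm)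
      (fun z hz => hf z (hsub (Set.Ioo_subset_Icc_self hz)))
    exact ⟨c, hc1.1, hc1.2, hc2⟩
  choose c hc1 hc2 hc3 using key
  have hcmono : StrictMono c := by
    intro i j hij
    have h1 : c i < (T.orderIsoOfFin rfl ⟨(i : ℕ)+1, by omega⟩ : ℝ) := hc2 i
    have h2 : (T.orderIsoOfFin rfl ⟨(j : ℕ), by omega⟩ : ℝ) < c j := hc1 j
    have h3 : (T.orderIsoOfFin rfl ⟨(i : ℕ)+1, by omega⟩ : ℝ) ≤
        (T.orderIsoOfFin rfl ⟨(j : ℕ), by omega⟩ : ℝ) := by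
      have : ((i : ℕ) + 1 : ℕ) ≤ (j : ℕ) := hij
      have h4 : (T.orderIsoOfFin rfl ⟨(i : ℕ)+1, by omega⟩) ≤
          (T.orderIsoOfFin rfl ⟨(j : ℕ), by omega⟩) :=
        (T.orderIsoOfFin rfl).monotone (by simp [Fin.le_def]; omega)
      exact_mod_cast h4
    linarith
  have hcmem : ∀ i : Fin (m - 1), c i ∈ S' := by
    intro i
    have hx0 : (0:ℝ) < (T.orderIsoOfFin rfl ⟨i, by omega⟩ : ℝ) :=
      (hT _ (T.orderIsoOfFin rfl ⟨i, by omega⟩).2).1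
    exact hS' (c i) (lt_trans hx0 (hc1 i)) (hc3 i)
  have hcard : Fintype.card (Fin (m - 1)) ≤ S'.card := by
    have := Finset.card_le_card_of_injOn (s := Finset.univ) c (fun i _ => hcmem i)
      (fun i _ j _ hij => hcmono.injective hij)
    simpa using this
  simp at hcard
  omega

private lemma finset_zeros {f f' : ℝ → ℝ}
    (hf : ∀ x ∈ Set.Ioi (0:ℝ), HasDerivAt f (f' x) x)
    (S' : Finset ℝ) (hS' : ∀ x ∈ Set.Ioi (0:ℝ), f' x = 0 → x ∈ S') :
    ∃ S : Finset ℝ, S.card ≤ S'.card + 1 ∧ ∀ t ∈ Set.Ioi (0:ℝ), f t = 0 → t ∈ S := by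
  set Z : Set ℝ := {t | t ∈ Set.Ioi (0:ℝ) ∧ f t = 0} with hZ
  have hfin : Z.Finite := by
    by_contra hinf
    obtain ⟨T, hTsub, hTcard⟩ := Set.Infinite.exists_subset_card_eq hinf (S'.card + 2)
    have := card_le_of_rolle hf S' hS' T (fun t ht => hTsub ht)
    omega
  refine ⟨hfin.toFinset, ?_, fun t ht h0 => hfin.mem_toFinset.mpr ⟨ht, h0⟩⟩
  exact card_le_of_rolle hf S' hS' hfin.toFinset (fun t ht => hfin.mem_toFinset.mp ht)

private lemma main_ind : ∀ (n : ℕ) (a b : Fin n → ℝ), Function.Injective b →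
    (∀ t ∈ Set.Ioi (0:ℝ), ∑ i, a i * t ^ (b i) = 0) ∨
      ∃ S : Finset ℝ, S.card + 1 ≤ n ∧
        ∀ t ∈ Set.Ioi (0:ℝ), (∑ i, a i * t ^ (b i)) = 0 → t ∈ S := by
  intro n
  induction n with
  | zero => intro a b _; left; intro t _; simp
  | succ n ih =>
    intro a b hb
    set j : Fin (n+1) := 0 with hj
    set a' : Fin n → ℝ := fun k => a (j.succAbove k) * (b (j.succAbove k) - b j) with ha'
    set b' : Fin n → ℝ := fun k => b (j.succAbove k) - b j - 1 with hb'def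
    have hb' : Function.Injective b' := by
      intro k₁ k₂ hk
      have h1 : b (j.succAbove k₁) = b (j.succAbove k₂) := by
        simp only [b'] at hk; linarith
      exact Fin.succAbove_right_injective (hb h1)
    set f : ℝ → ℝ := fun t => ∑ i, a i * t ^ (b i - b j) with hf
    set g : ℝ → ℝ := fun t => ∑ k, a' k * t ^ (b' k) with hg
    have hderiv : ∀ t ∈ Set.Ioi (0:ℝ), HasDerivAt f (g t) t := by
      intro t ht
      have h1 : HasDerivAt f (∑ i, a i * ((b i - b j) * t ^ (b i - b j - 1))) t :=
        HasDerivAt.fun_sum fun i _ =>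
          (Real.hasDerivAt_rpow_const (Or.inl (ne_of_gt ht))).const_mul (a i)
      convert h1 using 1
      rw [Fin.sum_univ_succAbove (fun i => a i * ((b i - b j) * t ^ (b i - b j - 1))) j]
      simp only [g, a', b', sub_self, zero_mul, mul_zero, zero_add]
      exact Finset.sum_congr rfl fun k _ => by ring
    have hrel : ∀ t ∈ Set.Ioi (0:ℝ), ((∑ i, a i * t ^ (b i)) = 0 ↔ f t = 0) := by
      intro t ht
      have ht0 : (0:ℝ) < t := ht
      have hfeq : f t = (∑ i, a i * t ^ (b i)) / t ^ (b j) := by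
        rw [Finset.sum_div]
        exact Finset.sum_congr rfl fun i _ => by
          rw [Real.rpow_sub ht0, mul_div_assoc]
      rw [hfeq, div_eq_zero_iff]
      have : t ^ (b j) ≠ 0 := ne_of_gt (Real.rpow_pos_of_pos ht0 _)
      tauto
    rcases ih a' b' hb' with hg0 | ⟨S', hS'card, hS'⟩
    · -- g ≡ 0 on Ioi 0, so f is constant there
      have hconst : ∀ u v : ℝ, 0 < u → u < v → f u = f v := by
        intro u v hu huv
        have hsub : Set.Icc u v ⊆ Set.Ioi (0:ℝ) := fun z hz => lt_of_lt_of_le hu hz.1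
        have hcont : ContinuousOn f (Set.Icc u v) := fun z hz =>
          ((hderiv z (hsub hz)).continuousAt).continuousWithinAt
        obtain ⟨cc, hcc1, hcc2⟩ := exists_hasDerivAt_eq_slope f g huv hcont
          (fun z hz => hderiv z (hsub (Set.Ioo_subset_Icc_self hz)))
        have : g cc = 0 := hg0 cc (lt_trans hu hcc1.1)
        rw [this] at hcc2
        have hvu : v - u ≠ 0 := by linarith
        have := (div_eq_zero_iff.mp hcc2.symm).resolve_right hvu
        linarith
      have hconst' : ∀ x ∈ Set.Ioi (0:ℝ), f x = f 1 := by
        intro x hx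
        have hx0 : (0:ℝ) < x := hx
        rcases lt_trichotomy x 1 with h | h | h
        · exact hconst x 1 hx0 h
        · rw [h]
        · exact (hconst 1 x one_pos h).symm
      by_cases hf1 : f 1 = 0
      · left
        intro t ht
        rw [hrel t ht, hconst' t ht]
        exact hf1
      · right
        refine ⟨∅, by simp, fun t ht h0 => absurd ((hrel t ht).mp h0) ?_⟩
        rw [hconst' t ht]
        exact hf1
    · obtain ⟨S, hScard, hS⟩ := finset_zeros hderiv S' (fun x hx h0 => hS' x hx h0)
      right
      exact ⟨S, by omega, fun t ht h0 => hS t ht ((hrel t ht).mp h0)⟩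

/-- A generalized polynomial `h t = ∑ aᵢ t^{bᵢ}` with distinct real exponents is either
identically zero on `(0,∞)` or has at most `n-1` zeroes in `(0,∞)`. -/
theorem stmt_0 (n : ℕ) (a b : Fin n → ℝ) (hb : Function.Injective b)
    (h : ℝ → ℝ) (hh : ∀ t, h t = ∑ i, a i * t ^ (b i)) :
    (∀ t ∈ Set.Ioi (0:ℝ), h t = 0) ∨
      ∃ S : Finset ℝ, S.card ≤ n - 1 ∧ ∀ t ∈ Set.Ioi (0:ℝ), h t = 0 → t ∈ S := by
  rcases main_ind n a b hb with h0 | ⟨S, hScard, hS⟩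
  · left; intro t ht; rw [hh]; exact h0 t ht
  · right; exact ⟨S, by omega, fun t ht ht0 => hS t ht (by rw [← hh]; exact ht0)⟩
end

section
/- Let $a_1,\ldots,a_n, b_1,\ldots,b_n$ be real numbers with the $b_i$ distinct, and suppose the function $h(t)=a_1 t^{b_1}+\cdots+a_n t^{b_n}$ has exactly $n-1$ zeroes in $(0,\infty)$ and is not identically zero. Then every zero of $h$ in $(0,\infty)$ is a sign change point of $h$ (i.e., $h$ takes both positive and negative values in every neighborhood of each zero). -/
open Real Set

lemma contOn_of_der {g G : ℝ → ℝ} (hg : ∀ t : ℝ, 0 < t → HasDerivAt g (G t) t)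
    {x y : ℝ} (hx : 0 < x) : ContinuousOn g (Icc x y) := fun t ht =>
  ((hg t (lt_of_lt_of_le hx ht.1)).continuousAt).continuousWithinAt

lemma rolle_finset (g G : ℝ → ℝ)
    (hg : ∀ t : ℝ, 0 < t → HasDerivAt g (G t) t)
    (T : Finset ℝ) (hT : ∀ t ∈ T, 0 < t ∧ g t = 0) :
    ∃ C : Finset ℝ, C.card = T.card - 1 ∧ ∀ t ∈ C, (0 < t ∧ G t = 0) ∧ t ∉ T := by
  set k := T.card with hk
  rcases Nat.eq_zero_or_pos k with h0 | hkpos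
  · exact ⟨∅, by simp [← hk, h0], by simp⟩
  set e : Fin k ≃o {x // x ∈ T} := T.orderIsoOfFin hk.symm with he
  have epos : ∀ i : Fin k, (0:ℝ) < e i := fun i => (hT _ (e i).2).1
  have ezero : ∀ i : Fin k, g (e i) = 0 := fun i => (hT _ (e i).2).2
  have hcast : ∀ i : Fin (k-1), ((i:ℕ) < k) ∧ ((i:ℕ)+1 < k) := by
    intro i; have := i.2; omega
  have key : ∀ i : Fin (k-1), ∃ c : ℝ,
      ((e ⟨i, (hcast i).1⟩ : ℝ) < c ∧ c < e ⟨(i:ℕ)+1, (hcast i).2⟩) ∧ G c = 0 := by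
    intro i
    have hab : (e ⟨i, (hcast i).1⟩ : ℝ) < e ⟨(i:ℕ)+1, (hcast i).2⟩ := by
      have : (⟨(i:ℕ), (hcast i).1⟩ : Fin k) < ⟨(i:ℕ)+1, (hcast i).2⟩ := by
        simp [Fin.lt_def]
      exact e.strictMono this
    have hpos : (0:ℝ) < e ⟨i, (hcast i).1⟩ := epos _
    obtain ⟨c, hc, hGc⟩ := exists_hasDerivAt_eq_zero hab (contOn_of_der hg hpos)
      (by rw [ezero, ezero])
      (fun x hx => hg x (lt_trans hpos hx.1))
    exact ⟨c, hc, hGc⟩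
  choose c hc hGc using key
  have cmono : StrictMono c := by
    intro i j hij
    calc c i < e ⟨(i:ℕ)+1, (hcast i).2⟩ := (hc i).2
    _ ≤ e ⟨(j:ℕ), (hcast j).1⟩ := by
        apply e.monotone; simp [Fin.le_def]; omega
    _ < c j := (hc j).1
  have cnotT : ∀ i, c i ∉ T := by
    intro i hmem
    set m : Fin k := e.symm ⟨c i, hmem⟩ with hm
    have hem : (e m : ℝ) = c i := by simp [hm]
    have h1 : (⟨(i:ℕ), (hcast i).1⟩ : Fin k) < m := by
      apply e.strictMono.lt_iff_lt.mp; rw [← Subtype.coe_lt_coe, hem]; exact (hc i).1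
    have h2 : m < (⟨(i:ℕ)+1, (hcast i).2⟩ : Fin k) := by
      apply e.strictMono.lt_iff_lt.mp; rw [← Subtype.coe_lt_coe, hem]; exact (hc i).2
    rw [Fin.lt_def] at h1 h2; simp at h1 h2; omega
  refine ⟨Finset.univ.image c, ?_, ?_⟩
  · rw [Finset.card_image_of_injective _ cmono.injective, Finset.card_univ, Fintype.card_fin]
  · intro t ht
    simp only [Finset.mem_image, Finset.mem_univ, true_and] at ht
    obtain ⟨i, rfl⟩ := ht
    exact ⟨⟨lt_trans (epos _) (hc i).1, hGc i⟩, cnotT i⟩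

-- MVT-based: if derivative vanishes on (0,∞) then g takes equal values
lemma eq_of_deriv_zero {g G : ℝ → ℝ} (hg : ∀ t : ℝ, 0 < t → HasDerivAt g (G t) t)
    (hGz : ∀ s : ℝ, 0 < s → G s = 0) {x y : ℝ} (hx : 0 < x) (hy : 0 < y) :
    g x = g y := by
  have main : ∀ u v : ℝ, 0 < u → u < v → g u = g v := by
    intro u v hu huv
    have cont : ContinuousOn g (Icc u v) := fun t ht =>
      ((hg t (lt_of_lt_of_le hu ht.1)).continuousAt).continuousWithinAt
    obtain ⟨c, hc, hslope⟩ := exists_hasDerivAt_eq_slope g G huv cont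
      (fun t ht => hg t (lt_trans hu ht.1))
    rw [hGz c (lt_trans hu hc.1)] at hslope
    rcases div_eq_zero_iff.mp hslope.symm with h | h
    · linarith
    · linarith
  rcases lt_trichotomy x y with h | h | h
  · exact main x y hx h
  · rw [h]
  · exact (main y x hy h).symm

lemma expPoly_zeros_lt : ∀ (n : ℕ) (a b : Fin n → ℝ), Function.Injective b →
    (∃ t : ℝ, 0 < t ∧ ∑ i, a i * t ^ (b i) ≠ 0) →
    ∀ T : Finset ℝ, (∀ t ∈ T, 0 < t ∧ ∑ i, a i * t ^ (b i) = 0) → T.card < n := by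
  intro n
  induction n with
  | zero => rintro a b hb ⟨t, ht, hne⟩ T hT; simp at hne
  | succ n IH =>
    intro a b hb hnz T hT
    set g : ℝ → ℝ := fun t => ∑ i, a i * t ^ (b i - b 0) with hgdef
    set G : ℝ → ℝ := fun t =>
      ∑ i : Fin n, (a i.succ * (b i.succ - b 0)) * t ^ (b i.succ - b 0 - 1) with hGdef
    have hgf : ∀ t : ℝ, 0 < t → g t = t ^ (-(b 0)) * ∑ i, a i * t ^ (b i) := by
      intro t ht
      rw [hgdef, Finset.mul_sum]
      refine Finset.sum_congr rfl fun i _ => ?_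
      rw [Real.rpow_sub ht, Real.rpow_neg ht.le]
      ring
    have hgzero : ∀ t : ℝ, 0 < t → (g t = 0 ↔ ∑ i, a i * t ^ (b i) = 0) := by
      intro t ht
      rw [hgf t ht, mul_eq_zero]
      have : t ^ (-(b 0)) ≠ 0 := (Real.rpow_pos_of_pos ht _).ne'
      tauto
    have hder : ∀ t : ℝ, 0 < t → HasDerivAt g (G t) t := by
      intro t ht
      have h1 : HasDerivAt g
          (∑ i : Fin (n+1), a i * ((b i - b 0) * t ^ (b i - b 0 - 1))) t := by
        apply HasDerivAt.fun_sum
        intro i _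
        exact (Real.hasDerivAt_rpow_const (Or.inl ht.ne')).const_mul (a i)
      convert h1 using 1
      rw [Fin.sum_univ_succ]
      simp only [sub_self, zero_mul, mul_zero, zero_add]
      exact Finset.sum_congr rfl fun i _ => by ring
    have hgT : ∀ t ∈ T, 0 < t ∧ g t = 0 := fun t ht =>
      ⟨(hT t ht).1, (hgzero t (hT t ht).1).mpr (hT t ht).2⟩
    obtain ⟨t₁, ht₁, hne₁⟩ := hnz
    have hgt₁ : g t₁ ≠ 0 := fun h => hne₁ ((hgzero t₁ ht₁).mp h)
    by_cases hGnz : ∃ s : ℝ, 0 < s ∧ G s ≠ 0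
    · obtain ⟨C, hCcard, hC⟩ := rolle_finset g G hder T hgT
      have cinj : Function.Injective (fun i : Fin n => b i.succ - b 0 - 1) := by
        intro i j hij
        simp only at hij
        have : b i.succ = b j.succ := by linarith
        exact Fin.succ_injective _ (hb this)
      have := IH (fun i => a i.succ * (b i.succ - b 0)) (fun i => b i.succ - b 0 - 1)
        cinj (by obtain ⟨s, hs, hGs⟩ := hGnz; exact ⟨s, hs, hGs⟩)
        C (fun t ht => (hC t ht).1)
      omega
    · push_neg at hGnz
      rcases Finset.eq_empty_or_nonempty T with rfl | ⟨t₀, ht₀⟩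
      · simp
      · exfalso
        have := eq_of_deriv_zero hder hGnz (hgT t₀ ht₀).1 ht₁
        rw [(hgT t₀ ht₀).2] at this
        exact hgt₁ this.symm

/-- If `h t = ∑ aᵢ t^{bᵢ}` (distinct real exponents) is not identically zero on `(0,∞)` and has
exactly `n-1` zeroes there, then every zero in `(0,∞)` is a sign change point of `h`. -/
theorem stmt_1 (n : ℕ) (a b : Fin n → ℝ) (hb : Function.Injective b)
    (h : ℝ → ℝ) (hh : ∀ t, h t = ∑ i, a i * t ^ (b i))
    (hnz : ∃ t ∈ Set.Ioi (0:ℝ), h t ≠ 0)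
    (S : Finset ℝ) (hS : (S : Set ℝ) = {t ∈ Set.Ioi (0:ℝ) | h t = 0})
    (hcard : S.card = n - 1) :
    ∀ t₀ ∈ Set.Ioi (0:ℝ), h t₀ = 0 →
      ∀ ε > 0, (∃ x ∈ Set.Ioi (0:ℝ), |x - t₀| < ε ∧ 0 < h x) ∧
        (∃ x ∈ Set.Ioi (0:ℝ), |x - t₀| < ε ∧ h x < 0) := by
  obtain ⟨t₁, ht₁, hne₁⟩ := hnz
  rw [Set.mem_Ioi] at ht₁
  obtain ⟨m, rfl⟩ : ∃ m, n = m + 1 := by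
    cases n with
    | zero => exfalso; apply hne₁; rw [hh]; simp
    | succ m => exact ⟨m, rfl⟩
  intro t₀ ht₀ hz ε hε
  rw [Set.mem_Ioi] at ht₀
  have ht₀S : t₀ ∈ S := by
    rw [← Finset.mem_coe, hS]; exact ⟨Set.mem_Ioi.mpr ht₀, hz⟩
  have hm : 1 ≤ m := by
    have : 1 ≤ S.card := Finset.card_pos.mpr ⟨t₀, ht₀S⟩
    omega
  -- set up g and G
  set g : ℝ → ℝ := fun t => ∑ i, a i * t ^ (b i - b 0) with hgdef
  set G : ℝ → ℝ := fun t =>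
    ∑ i : Fin m, (a i.succ * (b i.succ - b 0)) * t ^ (b i.succ - b 0 - 1) with hGdef
  have hgf : ∀ t : ℝ, 0 < t → g t = t ^ (-(b 0)) * h t := by
    intro t ht
    rw [hgdef, hh, Finset.mul_sum]
    refine Finset.sum_congr rfl fun i _ => ?_
    rw [Real.rpow_sub ht, Real.rpow_neg ht.le]
    ring
  have hgzero : ∀ t : ℝ, 0 < t → (g t = 0 ↔ h t = 0) := by
    intro t ht
    rw [hgf t ht, mul_eq_zero]
    have : t ^ (-(b 0)) ≠ 0 := (Real.rpow_pos_of_pos ht _).ne'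
    tauto
  have hder : ∀ t : ℝ, 0 < t → HasDerivAt g (G t) t := by
    intro t ht
    have h1 : HasDerivAt g
        (∑ i : Fin (m+1), a i * ((b i - b 0) * t ^ (b i - b 0 - 1))) t := by
      apply HasDerivAt.fun_sum
      intro i _
      exact (Real.hasDerivAt_rpow_const (Or.inl ht.ne')).const_mul (a i)
    convert h1 using 1
    rw [Fin.sum_univ_succ]
    simp only [sub_self, zero_mul, mul_zero, zero_add]
    exact Finset.sum_congr rfl fun i _ => by ring
  have hgt₀ : g t₀ = 0 := (hgzero t₀ ht₀).mpr hz
  have hgt₁ : g t₁ ≠ 0 := fun hq => hne₁ ((hgzero t₁ ht₁).mp hq)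
  have hGnz : ∃ s : ℝ, 0 < s ∧ G s ≠ 0 := by
    by_contra hq
    push_neg at hq
    have := eq_of_deriv_zero hder hq ht₀ ht₁
    rw [hgt₀] at this
    exact hgt₁ this.symm
  have hfinal : G t₀ ≠ 0 := by
    intro hGt₀
    have hST : ∀ t ∈ S, 0 < t ∧ g t = 0 := by
      intro t ht
      rw [← Finset.mem_coe, hS] at ht
      exact ⟨ht.1, (hgzero t ht.1).mpr ht.2⟩
    obtain ⟨C, hCcard, hC⟩ := rolle_finset g G hder S hST
    have ht₀C : t₀ ∉ C := fun hmem => (hC t₀ hmem).2 ht₀S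
    have hZ : ∀ t ∈ insert t₀ C, 0 < t ∧ G t = 0 := by
      intro t ht
      rcases Finset.mem_insert.mp ht with rfl | ht
      · exact ⟨ht₀, hGt₀⟩
      · exact (hC t ht).1
    have cinj : Function.Injective (fun i : Fin m => b i.succ - b 0 - 1) := by
      intro i j hij
      simp only at hij
      have : b i.succ = b j.succ := by linarith
      exact Fin.succ_injective _ (hb this)
    have hlt := expPoly_zeros_lt m (fun i => a i.succ * (b i.succ - b 0))
      (fun i => b i.succ - b 0 - 1) cinj hGnz (insert t₀ C) hZ
    rw [Finset.card_insert_of_notMem ht₀C, hCcard, hcard] at hlt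
    omega
  by_contra hcon
  rcases not_and_or.mp hcon with hc | hc <;> push_neg at hc
  -- In each case, derive G t₀ = 0
  case inl =>
    have hGt₀ : G t₀ = 0 := by
      have hmax : IsLocalMax g t₀ := by
        have hball : Metric.ball t₀ (min ε t₀) ∈ nhds t₀ :=
          Metric.ball_mem_nhds _ (lt_min hε ht₀)
        filter_upwards [hball] with x hx
        rw [Metric.mem_ball, Real.dist_eq] at hx
        have hxpos : 0 < x := by
          have h1 : |x - t₀| < t₀ := lt_of_lt_of_le hx (min_le_right _ _)
          have := abs_lt.mp h1
          linarith [this.1]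
        have hxh : h x ≤ 0 := hc x (Set.mem_Ioi.mpr hxpos)
          (lt_of_lt_of_le hx (min_le_left _ _))
        rw [hgt₀, hgf x hxpos]
        exact mul_nonpos_of_nonneg_of_nonpos (Real.rpow_pos_of_pos hxpos _).le hxh
      exact hmax.hasDerivAt_eq_zero (hder t₀ ht₀)
    exact hfinal hGt₀
  case inr =>
    have hGt₀ : G t₀ = 0 := by
      have hmin : IsLocalMin g t₀ := by
        have hball : Metric.ball t₀ (min ε t₀) ∈ nhds t₀ :=
          Metric.ball_mem_nhds _ (lt_min hε ht₀)
        filter_upwards [hball] with x hx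
        rw [Metric.mem_ball, Real.dist_eq] at hx
        have hxpos : 0 < x := by
          have h1 : |x - t₀| < t₀ := lt_of_lt_of_le hx (min_le_right _ _)
          have := abs_lt.mp h1
          linarith [this.1]
        have hxh : 0 ≤ h x := hc x (Set.mem_Ioi.mpr hxpos)
          (lt_of_lt_of_le hx (min_le_left _ _))
        rw [hgt₀, hgf x hxpos]
        exact mul_nonneg (Real.rpow_pos_of_pos hxpos _).le hxh
      exact hmin.hasDerivAt_eq_zero (hder t₀ ht₀)
    exact hfinal hGt₀
end

section
/- For any real numbers $p_1 < p_2 < \cdots < p_n$ and $0 < t_1 < t_2 < \cdots < t_n$, the determinant of the generalized Vandermonde matrix $A = (t_i^{p_j})_{i,j=1}^n$ is strictly positive. -/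
open Real

/-- An exponential polynomial with `k` terms and `k` distinct positive roots is zero. -/
lemma expPoly_roots_zero : ∀ (k : ℕ) (p : Fin k → ℝ), StrictMono p →
    ∀ (t : Fin k → ℝ), StrictMono t → (∀ i, 0 < t i) →
    ∀ (c : Fin k → ℝ), (∀ i, ∑ j, c j * t i ^ p j = 0) → ∀ j, c j = 0 := by
  intro k
  induction k with
  | zero => intro _ _ _ _ _ _ _ j; exact j.elim0
  | succ k ih =>
    intro p hp t ht ht0 c h
    -- the auxiliary function g x = ∑ c j * x ^ (p j - p 0)
    set g : ℝ → ℝ := fun x => ∑ j, c j * x ^ (p j - p 0) with hg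
    have hgzero : ∀ i, g (t i) = 0 := by
      intro i
      have := h i
      have ht0i := ht0 i
      calc g (t i) = (∑ j, c j * t i ^ p j) * (t i ^ p 0)⁻¹ := by
            rw [Finset.sum_mul]
            refine Finset.sum_congr rfl fun j _ => ?_
            rw [Real.rpow_sub ht0i, div_eq_mul_inv, mul_assoc]
        _ = 0 := by rw [h i, zero_mul]
    -- derivative of g
    have hderiv : ∀ x : ℝ, 0 < x →
        HasDerivAt g (∑ j, c j * ((p j - p 0) * x ^ (p j - p 0 - 1))) x := by
      intro x hx
      apply HasDerivAt.fun_sum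
      intro j _
      exact ((Real.hasDerivAt_rpow_const (Or.inl hx.ne')).const_mul (c j))
    -- Rolle on each interval
    have hroots : ∀ i : Fin k, ∃ s ∈ Set.Ioo (t i.castSucc) (t i.succ),
        ∑ j, c j * ((p j - p 0) * s ^ (p j - p 0 - 1)) = 0 := by
      intro i
      have hlt : t i.castSucc < t i.succ := ht (Fin.castSucc_lt_succ : i.castSucc < i.succ)
      refine exists_hasDerivAt_eq_zero (f := g) hlt ?_ (by rw [hgzero, hgzero]) ?_
      · refine continuousOn_finset_sum _ fun j _ => ?_
        refine (continuousOn_const.mul (ContinuousOn.rpow continuousOn_id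
          continuousOn_const fun x hx => Or.inl ?_))
        exact ((ht0 i.castSucc).trans_le hx.1).ne'
      · intro x hx
        exact hderiv x ((ht0 i.castSucc).trans hx.1)
    choose s hs hs0 using hroots
    have hsmono : StrictMono s := by
      intro i j hij
      have h1 : s i < t i.succ := (hs i).2
      have h2 : t j.castSucc < s j := (hs j).1
      have h3 : t i.succ ≤ t j.castSucc := ht.monotone (by
        simp [Fin.succ_le_castSucc_iff, hij])
      linarith
    have hspos : ∀ i, 0 < s i := fun i => (ht0 i.castSucc).trans (hs i).1
    -- apply IH
    have hcs : ∀ j : Fin k, c j.succ * (p j.succ - p 0) = 0 := by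
      refine ih (fun j => p j.succ - p 0 - 1)
        (fun a b hab => by dsimp only; have := hp (Fin.succ_lt_succ_iff.2 hab); linarith)
        s hsmono hspos (fun j => c j.succ * (p j.succ - p 0)) ?_
      intro i
      have := hs0 i
      rw [Fin.sum_univ_succ] at this
      simpa [mul_assoc] using this
    have hcsucc : ∀ j : Fin k, c j.succ = 0 := by
      intro j
      have hne : p j.succ - p 0 ≠ 0 := sub_ne_zero.2 (hp (Fin.succ_pos j)).ne'
      have := hcs j
      rcases mul_eq_zero.1 this with h' | h'
      · exact h'
      · exact absurd h' hne
    have hc0 : c 0 = 0 := by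
      have := h 0
      rw [Fin.sum_univ_succ] at this
      simp only [hcsucc, zero_mul, Finset.sum_const_zero, add_zero] at this
      have : c 0 * t 0 ^ p 0 = 0 := this
      rcases mul_eq_zero.1 this with h' | h'
      · exact h'
      · exact absurd h' (Real.rpow_pos_of_pos (ht0 0) _).ne'
    intro j
    rcases Fin.eq_zero_or_eq_succ j with rfl | ⟨j', rfl⟩
    · exact hc0
    · exact hcsucc j'

/-- Generalized Vandermonde determinants are nonzero. -/
lemma genVandermonde_det_ne_zero (n : ℕ) (p t : Fin n → ℝ) (hp : StrictMono p)
    (ht : StrictMono t) (ht0 : ∀ i, 0 < t i) :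
    Matrix.det (Matrix.of fun i j : Fin n => (t i) ^ (p j)) ≠ 0 := by
  intro hdet
  obtain ⟨v, hv, hmv⟩ := (Matrix.exists_mulVec_eq_zero_iff).2 hdet
  have hz : ∀ i, ∑ j, v j * t i ^ p j = 0 := by
    intro i
    have := congrFun hmv i
    simp only [Matrix.mulVec, dotProduct, Matrix.of_apply, Pi.zero_apply] at this
    rw [← this]
    exact Finset.sum_congr rfl fun j _ => mul_comm _ _
  exact hv (funext (expPoly_roots_zero n p hp t ht ht0 v hz))

/-- Generalized Vandermonde determinants `det (tᵢ^{pⱼ})` are strictly positive for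
`0 < t₁ < ⋯ < tₙ` and `p₁ < ⋯ < pₙ`. -/
theorem stmt_2 (n : ℕ) (p t : Fin n → ℝ) (hp : StrictMono p) (ht : StrictMono t)
    (ht0 : ∀ i, 0 < t i) :
    0 < Matrix.det (Matrix.of fun i j : Fin n => (t i) ^ (p j)) := by
  -- reference point
  set p₀ : Fin n → ℝ := fun j => (j : ℝ) with hp₀def
  set t₀ : Fin n → ℝ := fun i => (i : ℝ) + 1 with ht₀def
  have hp₀ : StrictMono p₀ := fun a b hab => by
    simp only [hp₀def]; exact_mod_cast hab
  have ht₀m : StrictMono t₀ := fun a b hab => by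
    simp only [ht₀def]
    have h' : (a : ℝ) < (b : ℝ) := by exact_mod_cast hab
    linarith
  have ht₀0 : ∀ i, 0 < t₀ i := fun i => by positivity
  -- segment maps
  set P : ℝ → Fin n → ℝ := fun u j => (1 - u) * p j + u * p₀ j with hPdef
  set T : ℝ → Fin n → ℝ := fun u i => (1 - u) * t i + u * t₀ i with hTdef
  have hcombo : ∀ (f g : Fin n → ℝ), StrictMono f → StrictMono g → ∀ u ∈ Set.Icc (0:ℝ) 1,
      StrictMono (fun i => (1 - u) * f i + u * g i) := by
    intro f g hf hg u hu a b hab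
    dsimp only
    have h1 := hf hab
    have h2 := hg hab
    rcases eq_or_lt_of_le hu.1 with rfl | hu0
    · simpa using h1
    · have : (1 - u) * f a ≤ (1 - u) * f b :=
        mul_le_mul_of_nonneg_left h1.le (by linarith [hu.2])
      have : u * g a < u * g b := by exact (mul_lt_mul_iff_right₀ hu0).2 h2
      linarith [mul_le_mul_of_nonneg_left h1.le (by linarith [hu.2] : (0:ℝ) ≤ 1 - u)]
  have hPmono : ∀ u ∈ Set.Icc (0:ℝ) 1, StrictMono (P u) := fun u hu => hcombo p p₀ hp hp₀ u hu
  have hTmono : ∀ u ∈ Set.Icc (0:ℝ) 1, StrictMono (T u) := fun u hu => hcombo t t₀ ht ht₀m u hu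
  have hTpos : ∀ u ∈ Set.Icc (0:ℝ) 1, ∀ i, 0 < T u i := by
    intro u hu i
    simp only [hTdef]
    rcases eq_or_lt_of_le hu.1 with rfl | hu0
    · simpa using ht0 i
    · have h1 : 0 ≤ (1 - u) * t i :=
        mul_nonneg (by linarith [hu.2]) (ht0 i).le
      have h2 : 0 < u * t₀ i := mul_pos hu0 (ht₀0 i)
      linarith
  -- the determinant function along the segment
  set G : ℝ → ℝ := fun u => Matrix.det (Matrix.of fun i j : Fin n => (T u i) ^ (P u j))
    with hGdef
  have hGne : ∀ u ∈ Set.Icc (0:ℝ) 1, G u ≠ 0 := fun u hu =>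
    genVandermonde_det_ne_zero n (P u) (T u) (hPmono u hu) (hTmono u hu) (hTpos u hu)
  have hG0 : G 0 = Matrix.det (Matrix.of fun i j : Fin n => (t i) ^ (p j)) := by
    simp only [hGdef, hPdef, hTdef]; norm_num
  have hG1 : 0 < G 1 := by
    have : G 1 = Matrix.det (Matrix.of fun i j : Fin n => (t₀ i) ^ (p₀ j)) := by
      simp only [hGdef, hPdef, hTdef]; norm_num
    rw [this]
    have hvd : (Matrix.of fun i j : Fin n => (t₀ i) ^ (p₀ j)) = Matrix.vandermonde t₀ := by
      ext i j
      simp only [Matrix.of_apply, Matrix.vandermonde_apply, hp₀def]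
      rw [Real.rpow_natCast]
    rw [hvd, Matrix.det_vandermonde]
    refine Finset.prod_pos fun i _ => Finset.prod_pos fun j hj => ?_
    have : i < j := Finset.mem_Ioi.1 hj
    linarith [ht₀m this]
  -- continuity of G on [0,1]
  have hGcont : ContinuousOn G (Set.Icc (0:ℝ) 1) := by
    have : Continuous fun A : Matrix (Fin n) (Fin n) ℝ => A.det := continuous_id.matrix_det
    refine this.comp_continuousOn ?_
    refine continuousOn_pi.2 fun i => continuousOn_pi.2 fun j => ?_
    refine ContinuousOn.rpow ?_ ?_ fun u hu => Or.inl (hTpos u hu i).ne'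
    · refine Continuous.continuousOn ?_
      simp only [hTdef]
      exact ((continuous_const.sub continuous_id).mul continuous_const).add
        (continuous_id.mul continuous_const)
    · refine Continuous.continuousOn ?_
      simp only [hPdef]
      exact ((continuous_const.sub continuous_id).mul continuous_const).add
        (continuous_id.mul continuous_const)
  -- conclusion: G 0 > 0
  rcases lt_or_gt_of_ne (hGne 0 (by norm_num)) with hneg | hposn
  · -- G 0 < 0 and G 1 > 0 give a zero in between
    exfalso
    have h01 : (0:ℝ) ≤ 1 := by norm_num
    have := intermediate_value_Icc h01 hGcont
    have hz : (0:ℝ) ∈ Set.Icc (G 0) (G 1) := ⟨hneg.le, hG1.le⟩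
    obtain ⟨u, hu, hGu⟩ := this hz
    exact hGne u hu hGu
  · rw [← hG0]; exact hposn
end

section
/- Suppose $f, g : [0,\infty) \to [0,\infty)$ are measurable functions such that $f - g$ changes sign at most $n-1$ times on $(0,\infty)$, and suppose $\int_0^\infty t^{p_i} f(t)\,dt = \int_0^\infty t^{p_i} g(t)\,dt < \infty$ for $n$ distinct exponents $p_1,\ldots,p_n \in (-1,\infty)$. Then $f = g$ almost everywhere. -/
open Real Set MeasureTheory

/-- Generalized polynomial: `∑ q ∈ Q, c q * x ^ q` with real exponents. -/
noncomputable def ppow (Q : Finset ℝ) (c : ℝ → ℝ) (x : ℝ) : ℝ := ∑ q ∈ Q, c q * x ^ q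

lemma ppow_hasDerivAt (Q : Finset ℝ) (c : ℝ → ℝ) {x : ℝ} (hx : 0 < x) :
    HasDerivAt (ppow Q c) (∑ q ∈ Q, c q * (q * x ^ (q - 1))) x := by
  have : HasDerivAt (fun y => ∑ q ∈ Q, c q * y ^ q) (∑ q ∈ Q, c q * (q * x ^ (q - 1))) x := by
    apply HasDerivAt.fun_sum
    intro q _
    exact (Real.hasDerivAt_rpow_const (Or.inl hx.ne')).const_mul (c q)
  exact this

lemma ppow_continuousAt (Q : Finset ℝ) (c : ℝ → ℝ) {x : ℝ} (hx : 0 < x) :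
    ContinuousAt (ppow Q c) x := (ppow_hasDerivAt Q c hx).continuousAt

lemma shift_fun_eq (Q : Finset ℝ) (c : ℝ → ℝ) (q₀ : ℝ) {x : ℝ} (hx : 0 < x) :
    ppow (Q.image (fun q => q - q₀)) (fun r => c (r + q₀)) x = ppow Q c x * x ^ (-q₀) := by
  unfold ppow
  rw [Finset.sum_image (by intro a _ b _ h; linarith), Finset.sum_mul]
  apply Finset.sum_congr rfl
  intro q _
  have h2 : q - q₀ + q₀ = q := by ring
  have : x ^ (q - q₀) = x ^ q * x ^ (-q₀) := by
    rw [← Real.rpow_add hx]; ring_nf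
  simp only [h2, this]; ring

lemma shift_deriv (Q : Finset ℝ) (c : ℝ → ℝ) (q₀ : ℝ) {x : ℝ} (hx : 0 < x) :
    HasDerivAt (ppow (Q.image (fun q => q - q₀)) (fun r => c (r + q₀)))
      (ppow ((Q.erase q₀).image (fun q => q - (q₀ + 1))) (fun r => (r + 1) * c (r + (q₀ + 1))) x)
      x := by
  have h := ppow_hasDerivAt (Q.image (fun q => q - q₀)) (fun r => c (r + q₀)) hx
  convert h using 1
  unfold ppow
  rw [Finset.sum_image (by intro a _ b _ h; linarith),
    Finset.sum_image (by intro a _ b _ h; linarith)]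
  rw [show (∑ q ∈ Q, c (q - q₀ + q₀) * ((q - q₀) * x ^ (q - q₀ - 1)))
      = ∑ q ∈ Q.erase q₀, c (q - q₀ + q₀) * ((q - q₀) * x ^ (q - q₀ - 1)) from
    (Finset.sum_erase _ (by simp)).symm]
  apply Finset.sum_congr rfl
  intro q _
  have e1 : q - (q₀ + 1) + 1 = q - q₀ := by ring
  have e2 : q - (q₀ + 1) + (q₀ + 1) = q := by ring
  have e3 : q - q₀ + q₀ = q := by ring
  have e4 : q - (q₀ + 1) = q - q₀ - 1 := by ring
  have e5 : q - q₀ - 1 + 1 = q - q₀ := by ring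
  have e6 : q - q₀ - 1 + (q₀ + 1) = q := by ring
  simp only [e1, e2, e3, e4, e5, e6]
  ring

lemma rolle_step (ψ ψd : ℝ → ℝ) (hd : ∀ x, 0 < x → HasDerivAt ψ (ψd x) x)
    (S : Finset ℝ) (hS : ∀ x ∈ S, 0 < x ∧ ψ x = 0) :
    ∃ S' : Finset ℝ, S'.card = S.card - 1 ∧ ∀ y ∈ S', (0 < y ∧ ψd y = 0) ∧ y ∉ S := by
  classical
  set K := S.card with hK
  rcases Nat.eq_zero_or_pos K with h0 | hKpos
  · exact ⟨∅, by simp [h0], by simp⟩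
  set e := S.orderIsoOfFin hK.symm with he
  have hmem : ∀ i : Fin K, (e i : ℝ) ∈ S := fun i => (e i).2
  have H : ∀ j : Fin (K - 1), ∃ y, y ∈ Ioo (e ⟨j, by omega⟩ : ℝ) (e ⟨j + 1, by omega⟩ : ℝ) ∧
      deriv ψ y = 0 := by
    intro j
    have hlt : (e ⟨j, by omega⟩ : ℝ) < (e ⟨j + 1, by omega⟩ : ℝ) := by
      have : (⟨(j : ℕ), by omega⟩ : Fin K) < ⟨j + 1, by omega⟩ := by
        simp [Fin.lt_def]
      exact e.strictMono this
    have ha := hS _ (hmem ⟨j, by omega⟩)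
    have hb := hS _ (hmem ⟨j + 1, by omega⟩)
    have hcont : ContinuousOn ψ (Icc (e ⟨j, by omega⟩ : ℝ) (e ⟨j + 1, by omega⟩ : ℝ)) := by
      intro x hxm
      exact ((hd x (lt_of_lt_of_le ha.1 hxm.1)).continuousAt).continuousWithinAt
    have := exists_deriv_eq_zero hlt hcont (by rw [ha.2, hb.2])
    exact this
  choose u hu1 hu2 using H
  have humono : StrictMono u := by
    intro j j' hjj
    have h1 : u j < (e ⟨j + 1, by omega⟩ : ℝ) := (hu1 j).2
    have h2 : (e ⟨j', by omega⟩ : ℝ) < u j' := (hu1 j').1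
    have h3 : (e ⟨(j : ℕ) + 1, by omega⟩ : ℝ) ≤ (e ⟨j', by omega⟩ : ℝ) := by
      apply e.monotone
      simp [Fin.le_def]
      omega
    linarith
  refine ⟨Finset.image u Finset.univ, ?_, ?_⟩
  · rw [Finset.card_image_of_injective _ humono.injective]
    simp
  · intro y hy
    simp only [Finset.mem_image, Finset.mem_univ, true_and] at hy
    obtain ⟨j, rfl⟩ := hy
    have hpos : 0 < u j := lt_trans (hS _ (hmem ⟨j, by omega⟩)).1 (hu1 j).1
    refine ⟨⟨hpos, ?_⟩, ?_⟩
    · have := (hd (u j) hpos).deriv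
      rw [← this]; exact hu2 j
    · intro hmemS
      set i := e.symm ⟨u j, hmemS⟩ with hi
      have hei : (e i : ℝ) = u j := by rw [hi]; simp
      have hlt1 : (e ⟨j, by omega⟩ : ℝ) < (e i : ℝ) := by rw [hei]; exact (hu1 j).1
      have hlt2 : (e i : ℝ) < (e ⟨(j : ℕ) + 1, by omega⟩ : ℝ) := by rw [hei]; exact (hu1 j).2
      have h1 : (⟨(j : ℕ), by omega⟩ : Fin K) < i := e.lt_iff_lt.mp (Subtype.coe_lt_coe.mp hlt1)
      have h2 : i < (⟨(j : ℕ) + 1, by omega⟩ : Fin K) := e.lt_iff_lt.mp (Subtype.coe_lt_coe.mp hlt2)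
      have h1' : (j : ℕ) < (i : ℕ) := by simpa [Fin.lt_def] using h1
      have h2' : (i : ℕ) < (j : ℕ) + 1 := by simpa [Fin.lt_def] using h2
      omega

/-- A nontrivial generalized polynomial with `m` terms has fewer than `m` positive zeros. -/
theorem key : ∀ (m : ℕ) (Q : Finset ℝ), Q.card = m → ∀ c : ℝ → ℝ, (∃ q ∈ Q, c q ≠ 0) →
    ∀ S : Finset ℝ, (∀ x ∈ S, 0 < x ∧ ppow Q c x = 0) → S.card < m := by
  intro m
  induction m using Nat.strong_induction_on with
  | _ m IH =>
    intro Q hQcard c ⟨q₀, hq₀Q, hq₀⟩ S hS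
    have hm1 : 1 ≤ m := by
      rw [← hQcard]; exact Finset.card_pos.mpr ⟨q₀, hq₀Q⟩
    by_cases hone : ∀ q ∈ Q, q ≠ q₀ → c q = 0
    · have hne : ∀ x, 0 < x → ppow Q c x ≠ 0 := by
        intro x hx
        unfold ppow
        rw [Finset.sum_eq_single_of_mem q₀ hq₀Q (fun b hb hne => by rw [hone b hb hne]; ring)]
        exact mul_ne_zero hq₀ (Real.rpow_pos_of_pos hx q₀).ne'
      rcases S.eq_empty_or_nonempty with rfl | ⟨x, hxS⟩
      · simp; omega
      · exact absurd (hS x hxS).2 (hne x (hS x hxS).1)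
    · push_neg at hone
      obtain ⟨q₁, hq₁Q, hq₁ne, hcq₁⟩ := hone
      rcases S.eq_empty_or_nonempty with rfl | hSne
      · simp; omega
      set Q' := (Q.erase q₀).image (fun q => q - (q₀ + 1)) with hQ'
      set c' := fun r : ℝ => (r + 1) * c (r + (q₀ + 1)) with hc'
      have hQ'card : Q'.card = m - 1 := by
        rw [hQ', Finset.card_image_of_injective _ (fun a b h => sub_left_inj.mp h),
          Finset.card_erase_of_mem hq₀Q, hQcard]
      have hQ'ne : ∃ r ∈ Q', c' r ≠ 0 := by
        refine ⟨q₁ - (q₀ + 1), Finset.mem_image_of_mem _ (Finset.mem_erase.mpr ⟨hq₁ne, hq₁Q⟩), ?_⟩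
        rw [hc']
        have e1 : q₁ - (q₀ + 1) + 1 = q₁ - q₀ := by ring
        have e2 : q₁ - (q₀ + 1) + (q₀ + 1) = q₁ := by ring
        simp only [e1, e2]
        exact mul_ne_zero (sub_ne_zero.mpr hq₁ne) hcq₁
      set ψ := ppow (Q.image (fun q => q - q₀)) (fun r => c (r + q₀)) with hψ
      have hψzero : ∀ x ∈ S, 0 < x ∧ ψ x = 0 := by
        intro x hx
        refine ⟨(hS x hx).1, ?_⟩
        rw [hψ, shift_fun_eq Q c q₀ (hS x hx).1, (hS x hx).2, zero_mul]
      obtain ⟨S', hS'card, hS'⟩ := rolle_step ψ (ppow Q' c')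
        (fun x hx => shift_deriv Q c q₀ hx) S hψzero
      have hlt := IH (m - 1) (by omega) Q' hQ'card c' hQ'ne S'
        (fun y hy => ⟨(hS' y hy).1.1, (hS' y hy).1.2⟩)
      have : 1 ≤ S.card := Finset.card_pos.mpr hSne
      omega

/-- If moreover some positive zero is a critical point, the count drops by one more. -/
theorem key2 (Q : Finset ℝ) (c : ℝ → ℝ) (hnt : ∃ q ∈ Q, c q ≠ 0) (S : Finset ℝ)
    (hS : ∀ x ∈ S, 0 < x ∧ ppow Q c x = 0) (y : ℝ) (hyS : y ∈ S)
    (hdy : deriv (ppow Q c) y = 0) : S.card < Q.card - 1 := by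
  classical
  obtain ⟨q₀, hq₀Q, hq₀⟩ := hnt
  obtain ⟨hy0, hφy⟩ := hS y hyS
  by_cases hone : ∀ q ∈ Q, q ≠ q₀ → c q = 0
  · exfalso
    apply absurd hφy
    unfold ppow
    rw [Finset.sum_eq_single_of_mem q₀ hq₀Q (fun b hb hne => by rw [hone b hb hne]; ring)]
    exact mul_ne_zero hq₀ (Real.rpow_pos_of_pos hy0 q₀).ne'
  push_neg at hone
  obtain ⟨q₁, hq₁Q, hq₁ne, hcq₁⟩ := hone
  set Q' := (Q.erase q₀).image (fun q => q - (q₀ + 1)) with hQ'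
  set c' := fun r : ℝ => (r + 1) * c (r + (q₀ + 1)) with hc'
  have hQ'card : Q'.card = Q.card - 1 := by
    rw [hQ', Finset.card_image_of_injective _ (fun a b h => sub_left_inj.mp h),
      Finset.card_erase_of_mem hq₀Q]
  have hQ'ne : ∃ r ∈ Q', c' r ≠ 0 := by
    refine ⟨q₁ - (q₀ + 1), Finset.mem_image_of_mem _ (Finset.mem_erase.mpr ⟨hq₁ne, hq₁Q⟩), ?_⟩
    rw [hc']
    have e1 : q₁ - (q₀ + 1) + 1 = q₁ - q₀ := by ring
    have e2 : q₁ - (q₀ + 1) + (q₀ + 1) = q₁ := by ring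
    simp only [e1, e2]
    exact mul_ne_zero (sub_ne_zero.mpr hq₁ne) hcq₁
  set ψ := ppow (Q.image (fun q => q - q₀)) (fun r => c (r + q₀)) with hψ
  have hψzero : ∀ x ∈ S, 0 < x ∧ ψ x = 0 := by
    intro x hx
    refine ⟨(hS x hx).1, ?_⟩
    rw [hψ, shift_fun_eq Q c q₀ (hS x hx).1, (hS x hx).2, zero_mul]
  obtain ⟨S', hS'card, hS'⟩ := rolle_step ψ (ppow Q' c')
    (fun x hx => shift_deriv Q c q₀ hx) S hψzero
  -- ppow Q' c' y = 0
  have hDy : ppow Q' c' y = 0 := by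
    have hA : HasDerivAt ψ (ppow Q' c' y) y := shift_deriv Q c q₀ hy0
    have hD0 : HasDerivAt (ppow Q c) 0 y := by
      have h1 := ppow_hasDerivAt Q c hy0
      have h2 : (∑ q ∈ Q, c q * (q * y ^ (q - 1))) = 0 := by rw [← h1.deriv]; exact hdy
      rwa [h2] at h1
    have hg : HasDerivAt (fun x : ℝ => ppow Q c x * x ^ (-q₀)) 0 y := by
      have := hD0.fun_mul (Real.hasDerivAt_rpow_const (p := -q₀) (Or.inl hy0.ne'))
      simpa [hφy] using this
    have hB : HasDerivAt ψ 0 y := by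
      apply hg.congr_of_eventuallyEq
      filter_upwards [eventually_gt_nhds hy0] with x hx
      exact shift_fun_eq Q c q₀ hx
    exact hA.unique hB
  have hynotS' : y ∉ S' := fun h => (hS' y h).2 hyS
  have happ := key (Q.card - 1) Q' hQ'card c' hQ'ne (insert y S')
    (by
      intro x hx
      rcases Finset.mem_insert.mp hx with rfl | hx'
      · exact ⟨hy0, hDy⟩
      · exact ⟨(hS' x hx').1.1, (hS' x hx').1.2⟩)
  rw [Finset.card_insert_of_notMem hynotS', hS'card] at happ
  have : 1 ≤ S.card := Finset.card_pos.mpr ⟨y, hyS⟩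
  omega

/-- IVT: if a generalized polynomial has no zeros on `[a,b] ⊆ (0,∞)`, its values at the
endpoints have the same sign. -/
lemma signconst (Q : Finset ℝ) (c : ℝ → ℝ) {a b : ℝ} (ha : 0 < a) (hab : a ≤ b)
    (hz : ∀ x ∈ Icc a b, ppow Q c x ≠ 0) : 0 < ppow Q c a * ppow Q c b := by
  have hcont : ContinuousOn (ppow Q c) (Icc a b) := fun x hx =>
    (ppow_continuousAt Q c (lt_of_lt_of_le ha hx.1)).continuousWithinAt
  have hA := hz a ⟨le_refl a, hab⟩
  have hB := hz b ⟨hab, le_refl b⟩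
  rcases hA.lt_or_gt with h1 | h1 <;> rcases hB.lt_or_gt with h2 | h2
  · exact mul_pos_of_neg_of_neg h1 h2
  · obtain ⟨x, hx, hx0⟩ := intermediate_value_Icc hab hcont ⟨h1.le, h2.le⟩
    exact absurd hx0 (hz x hx)
  · obtain ⟨x, hx, hx0⟩ := intermediate_value_Icc' hab hcont ⟨h2.le, h1.le⟩
    exact absurd hx0 (hz x hx)
  · exact mul_pos h1 h2

/-- If two nonnegative measurable functions on `[0,∞)` whose difference changes sign at most
`n-1` times on `(0,∞)` have the same (finite) `pᵢ`-th moments for `n` distinct exponents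
`pᵢ ∈ (-1,∞)`, then they are equal almost everywhere. -/
theorem stmt_3 (n : ℕ) (hn : 1 ≤ n) (f g : ℝ → ℝ)
    (hf : Measurable f) (hg : Measurable g)
    (hf0 : ∀ x, 0 ≤ f x) (hg0 : ∀ x, 0 ≤ g x)
    (p : Fin n → ℝ) (hpdist : Function.Injective p) (hp : ∀ i, -1 < p i)
    -- the difference `f - g` changes sign at most `n-1` times on `(0,∞)`:
    (hsign : ∃ k : ℕ, k ≤ n - 1 ∧ ∃ t : Fin k → ℝ, StrictMono t ∧ (∀ j, 0 < t j) ∧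
      ∃ ε : ℝ, (ε = 1 ∨ ε = -1) ∧ ∀ x ∈ Set.Ioi (0:ℝ), (∀ j, x ≠ t j) →
        0 ≤ ε * (-1 : ℝ) ^ ((Finset.univ.filter fun j : Fin k => t j < x).card) * (f x - g x))
    (hint : ∀ i, IntegrableOn (fun x => x ^ (p i) * f x) (Set.Ioi 0) volume ∧
      IntegrableOn (fun x => x ^ (p i) * g x) (Set.Ioi 0) volume)
    (heq : ∀ i, ∫ x in Set.Ioi (0:ℝ), x ^ (p i) * f x = ∫ x in Set.Ioi (0:ℝ), x ^ (p i) * g x) :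
    f =ᵐ[volume.restrict (Set.Ici (0:ℝ))] g := by
  classical
  obtain ⟨k, hk, t, htmono, htpos, ε, hε, hsgn⟩ := hsign
  have hkn : k + 1 ≤ n := by omega
  set q : Fin (k+1) → ℝ := fun i => p (Fin.castLE hkn i) with hqdef
  have hqinj : Function.Injective q := fun a b h => Fin.castLE_injective hkn (hpdist h)
  -- a nontrivial coefficient vector annihilating the prescribed zeros
  set M : Matrix (Fin (k+1)) (Fin (k+1)) ℝ :=
    fun j i => if h : (j : ℕ) < k then (t ⟨j, h⟩) ^ (q i) else 0 with hM
  have hdet : M.det = 0 := Matrix.det_eq_zero_of_row_eq_zero (Fin.last k)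
    (fun i => by simp [hM])
  obtain ⟨c, hcne, hMc⟩ := Matrix.exists_mulVec_eq_zero_iff.mpr hdet
  have hzero : ∀ j : Fin k, ∑ i, c i * (t j) ^ (q i) = 0 := by
    intro j
    have h := congrFun hMc (Fin.castSucc j)
    have hjk : ((Fin.castSucc j : Fin (k+1)) : ℕ) < k := by simp
    simp only [Matrix.mulVec, dotProduct, Pi.zero_apply] at h
    rw [← h]
    apply Finset.sum_congr rfl
    intro i _
    have hMe : M (Fin.castSucc j) i = (t j) ^ (q i) := by
      rw [hM]
      simp only
      rw [dif_pos hjk]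
      congr 1
    rw [hMe]; ring
  -- translate to a `ppow`
  set Q : Finset ℝ := Finset.image q Finset.univ with hQdef
  set C : ℝ → ℝ := fun r => ∑ i ∈ Finset.univ.filter (fun i => q i = r), c i with hCdef
  have hCq : ∀ i, C (q i) = c i := by
    intro i
    have hfil : Finset.univ.filter (fun i' => q i' = q i) = {i} := by
      ext i'; simp [hqinj.eq_iff]
    rw [hCdef]; simp only; rw [hfil, Finset.sum_singleton]
  have hppow : ∀ x : ℝ, ppow Q C x = ∑ i, c i * x ^ (q i) := by
    intro x
    unfold ppow
    rw [hQdef, Finset.sum_image (fun a _ b _ h => hqinj h)]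
    exact Finset.sum_congr rfl fun i _ => by rw [hCq]
  have hQcard : Q.card = k + 1 := by
    rw [hQdef, Finset.card_image_of_injective _ hqinj, Finset.card_univ, Fintype.card_fin]
  have hCnt : ∃ r ∈ Q, C r ≠ 0 := by
    obtain ⟨i, hi⟩ := Function.ne_iff.mp hcne
    exact ⟨q i, Finset.mem_image_of_mem _ (Finset.mem_univ i), by rw [hCq]; exact hi⟩
  have hφt : ∀ j : Fin k, ppow Q C (t j) = 0 := fun j => by rw [hppow]; exact hzero j
  set T : Finset ℝ := Finset.image t Finset.univ with hTdef
  have hTcard : T.card = k := by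
    rw [hTdef, Finset.card_image_of_injective _ htmono.injective, Finset.card_univ,
      Fintype.card_fin]
  have hTz : ∀ x ∈ T, 0 < x ∧ ppow Q C x = 0 := by
    intro x hx
    obtain ⟨j, _, rfl⟩ := Finset.mem_image.mp hx
    exact ⟨htpos j, hφt j⟩
  -- the generalized polynomial is nonzero away from the `t j`
  have nonzero : ∀ z : ℝ, 0 < z → (∀ j, t j ≠ z) → ppow Q C z ≠ 0 := by
    intro z hz hzT h0
    have hzT' : z ∉ T := by
      intro hmem
      obtain ⟨j, _, hj⟩ := Finset.mem_image.mp hmem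
      exact hzT j hj
    have := key (k+1) Q hQcard C hCnt (insert z T)
      (by
        intro x hx
        rcases Finset.mem_insert.mp hx with rfl | hx'
        · exact ⟨hz, h0⟩
        · exact hTz x hx')
    rw [Finset.card_insert_of_notMem hzT', hTcard] at this
    omega
  -- the generalized polynomial changes sign at each `t j`
  have signchange : ∀ (j : Fin k) (a b : ℝ), 0 < a → a < t j → t j < b →
      (∀ j' : Fin k, t j' ∈ Icc a b → j' = j) → ppow Q C a * ppow Q C b < 0 := by
    intro j a b ha haj hjb honly
    have hb : 0 < b := lt_trans (lt_trans ha haj) hjb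
    have haT : ∀ j', t j' ≠ a := by
      intro j' h
      have := honly j' (by rw [h]; exact ⟨le_refl a, le_of_lt (lt_trans haj hjb)⟩)
      rw [this] at h; linarith
    have hbT : ∀ j', t j' ≠ b := by
      intro j' h
      have := honly j' (by rw [h]; exact ⟨le_of_lt (lt_trans haj hjb), le_refl b⟩)
      rw [this] at h; linarith
    have hφa := nonzero a ha haT
    have hφb := nonzero b hb hbT
    rcases lt_trichotomy (ppow Q C a * ppow Q C b) 0 with h | h | h
    · exact h
    · exact absurd h (mul_ne_zero hφa hφb)
    exfalso
    have hzIcc : ∀ x y : ℝ, a ≤ x → x ≤ y → y ≤ b → (t j ∉ Icc x y) →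
        ∀ z ∈ Icc x y, ppow Q C z ≠ 0 := by
      intro x y hax hxy hyb hnj z hz h0
      have hz0 : 0 < z := lt_of_lt_of_le ha (le_trans hax hz.1)
      by_cases hT' : ∀ j', t j' ≠ z
      · exact nonzero z hz0 hT' h0
      · push_neg at hT'
        obtain ⟨j', hj'⟩ := hT'
        have := honly j' (by rw [hj']; exact ⟨le_trans hax hz.1, le_trans hz.2 hyb⟩)
        rw [this] at hj'
        exact hnj (hj' ▸ hz)
    obtain ⟨s, hs, hsa, hsb⟩ : ∃ s : ℝ, (s = 1 ∨ s = -1) ∧ 0 < s * ppow Q C a ∧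
        0 < s * ppow Q C b := by
      rcases mul_pos_iff.mp h with ⟨h1, h2⟩ | ⟨h1, h2⟩
      · exact ⟨1, Or.inl rfl, by linarith, by linarith⟩
      · exact ⟨-1, Or.inr rfl, by linarith, by linarith⟩
    have hnn : ∀ x ∈ Ioo a b, 0 ≤ s * ppow Q C x := by
      intro x hx
      rcases lt_trichotomy x (t j) with hxj | hxj | hxj
      · have hsc := signconst Q C ha hx.1.le
          (hzIcc a x (le_refl a) hx.1.le hx.2.le (fun hm => absurd hm.2 (not_le.mpr hxj)))
        nlinarith
      · rw [hxj, hφt j, mul_zero]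
      · have hx0 : 0 < x := lt_trans ha hx.1
        have hsc := signconst Q C hx0 hx.2.le
          (hzIcc x b hx.1.le hx.2.le (le_refl b) (fun hm => absurd hm.1 (not_le.mpr hxj)))
        nlinarith
    have hmin : IsLocalMin (fun x => s * ppow Q C x) (t j) := by
      have hIoo : Ioo a b ∈ nhds (t j) := Ioo_mem_nhds haj hjb
      refine Filter.eventually_of_mem hIoo ?_
      intro x hx
      simp only
      rw [hφt j, mul_zero]
      exact hnn x hx
    have hder := hmin.deriv_eq_zero
    have hd0 : deriv (ppow Q C) (t j) = 0 := by
      have hd : DifferentiableAt ℝ (ppow Q C) (t j) :=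
        (ppow_hasDerivAt Q C (htpos j)).differentiableAt
      rw [deriv_const_mul s hd] at hder
      rcases hs with rfl | rfl <;> linarith
    have hjT : t j ∈ T := Finset.mem_image_of_mem t (Finset.mem_univ j)
    have := key2 Q C hCnt T hTz (t j) hjT hd0
    rw [hTcard, hQcard] at this
    omega
  -- base: same sign when no `t j` separates
  have base : ∀ x y : ℝ, 0 < x → x ≤ y → (∀ j, t j ∉ Icc x y) →
      0 < ppow Q C x * ppow Q C y := by
    intro x y hx hxy hj
    apply signconst Q C hx hxy
    intro z hz h0
    have hz0 : 0 < z := lt_of_lt_of_le hx hz.1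
    by_cases hT' : ∀ j, t j ≠ z
    · exact nonzero z hz0 hT' h0
    · push_neg at hT'
      obtain ⟨j, hj'⟩ := hT'
      exact hj j (hj' ▸ hz)
  -- alternation of the sign of the polynomial across the points `t j`
  have Cprime : ∀ m : ℕ, ∀ x y : ℝ, 0 < x → x < y → (∀ j, t j ≠ x) → (∀ j, t j ≠ y) →
      (Finset.univ.filter fun j : Fin k => x < t j ∧ t j < y).card = m →
      0 < (-1:ℝ)^m * (ppow Q C x * ppow Q C y) := by
    intro m
    induction m with
    | zero =>
      intro x y hx hxy hxT hyT hcard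
      rw [pow_zero, one_mul]
      apply base x y hx hxy.le
      intro j hj
      have h1 : x < t j := lt_of_le_of_ne hj.1 (Ne.symm (hxT j))
      have h2 : t j < y := lt_of_le_of_ne hj.2 (hyT j)
      have hmem : j ∈ Finset.univ.filter (fun j : Fin k => x < t j ∧ t j < y) := by
        simp [h1, h2]
      rw [Finset.card_eq_zero.mp hcard] at hmem
      exact absurd hmem (Finset.notMem_empty j)
    | succ m IH =>
      intro x y hx hxy hxT hyT hcard
      set F := Finset.univ.filter (fun j : Fin k => x < t j ∧ t j < y) with hF
      have hFne : F.Nonempty := by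
        rw [← Finset.card_pos, ← hF] at *
        omega
      set j' := F.max' hFne with hj'
      have hj'F : j' ∈ F := F.max'_mem hFne
      have hj'mem : x < t j' ∧ t j' < y := by
        have := hj'F
        rw [hF] at this
        simpa using this
      have hmax : ∀ j ∈ F, t j ≤ t j' := fun j hj => htmono.monotone (F.le_max' j hj)
      have hno : ∀ j : Fin k, ¬ (t j' < t j ∧ t j < y) := by
        rintro j ⟨h1, h2⟩
        have hjF : j ∈ F := by
          rw [hF]; simp only [Finset.mem_filter, Finset.mem_univ, true_and]
          exact ⟨lt_trans hj'mem.1 h1, h2⟩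
        exact absurd (hmax j hjF) (not_le.mpr h1)
      set z' := (t j' + y)/2 with hz'def
      have hz'1 : t j' < z' := by rw [hz'def]; linarith [hj'mem.2]
      have hz'2 : z' < y := by rw [hz'def]; linarith [hj'mem.2]
      have hz'pos : 0 < z' := lt_trans (htpos j') hz'1
      have hz'T : ∀ j, t j ≠ z' := fun j hj => hno j ⟨hj ▸ hz'1, hj ▸ hz'2⟩
      set E := F.erase j' with hE
      set W := insert x (E.image t) with hW
      have hWne : W.Nonempty := ⟨x, Finset.mem_insert_self _ _⟩
      set w := W.max' hWne with hw
      have hwlt : w < t j' := by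
        rw [hw]
        apply Finset.max'_lt_iff W hWne |>.mpr
        intro b hb
        rcases Finset.mem_insert.mp hb with rfl | hb'
        · exact hj'mem.1
        · obtain ⟨j, hjE, rfl⟩ := Finset.mem_image.mp hb'
          have hjF := Finset.mem_of_mem_erase hjE
          have hne := Finset.ne_of_mem_erase hjE
          exact lt_of_le_of_ne (hmax j hjF) (fun h => hne (htmono.injective h))
      have hxw : x ≤ w := Finset.le_max' W x (Finset.mem_insert_self _ _)
      set z'' := (w + t j')/2 with hz''def
      have h1 : w < z'' := by rw [hz''def]; linarith
      have h2 : z'' < t j' := by rw [hz''def]; linarith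
      have hxz'' : x < z'' := lt_of_le_of_lt hxw h1
      have hz''pos : 0 < z'' := lt_trans hx hxz''
      have htw : ∀ j : Fin k, j ≠ j' → x < t j → t j < y → t j ≤ w := by
        intro j hne hjx hjy
        have hjF : j ∈ F := by
          rw [hF]; simp only [Finset.mem_filter, Finset.mem_univ, true_and]
          exact ⟨hjx, hjy⟩
        exact Finset.le_max' W (t j) (Finset.mem_insert_of_mem
          (Finset.mem_image_of_mem t (Finset.mem_erase.mpr ⟨hne, hjF⟩)))
      have hz''T : ∀ j, t j ≠ z'' := by
        intro j hj
        have hjx : x < t j := hj ▸ hxz''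
        have hjy : t j < y := by
          rw [hj]
          exact lt_trans h2 (lt_trans hz'1 hz'2)
        have hne : j ≠ j' := by
          intro hh
          rw [hh] at hj
          linarith
        have := htw j hne hjx hjy
        linarith [hj ▸ h1]
      have hcard'' : (Finset.univ.filter fun j : Fin k => x < t j ∧ t j < z'').card = m := by
        have hEq : (Finset.univ.filter fun j : Fin k => x < t j ∧ t j < z'') = E := by
          ext j
          rw [hE]
          simp only [Finset.mem_filter, Finset.mem_univ, true_and, Finset.mem_erase, hF]
          constructor
          · rintro ⟨h1', h2'⟩
            refine ⟨fun hjj => ?_, h1', lt_trans h2' (lt_trans h2 hj'mem.2)⟩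
            rw [hjj] at h2'
            linarith
          · rintro ⟨hne, hjx, hjy⟩
            have := htw j hne hjx hjy
            exact ⟨hjx, lt_of_le_of_lt this h1⟩
        rw [hEq, hE, Finset.card_erase_of_mem hj'F, hcard]
        omega
      have HIH := IH x z'' hx hxz'' hxT hz''T hcard''
      have HB : ppow Q C z'' * ppow Q C z' < 0 := by
        apply signchange j' z'' z' hz''pos h2 hz'1
        intro j'' hj''
        by_contra hne
        have hx'' : x < t j'' := lt_of_lt_of_le hxz'' hj''.1
        have hy'' : t j'' < y := lt_of_le_of_lt hj''.2 hz'2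
        have := htw j'' hne hx'' hy''
        linarith [hj''.1]
      have HC : 0 < ppow Q C z' * ppow Q C y := by
        apply base z' y hz'pos hz'2.le
        intro j hj
        exact hno j ⟨lt_of_lt_of_le hz'1 hj.1, lt_of_le_of_ne hj.2 (hyT j)⟩
      have hz''ne := nonzero z'' hz''pos hz''T
      have hz'ne := nonzero z' hz'pos hz'T
      have hprod := mul_pos (mul_pos HIH (neg_pos.mpr HB)) HC
      have hD : 0 < (ppow Q C z'' * ppow Q C z'') * (ppow Q C z' * ppow Q C z') :=
        mul_pos (mul_self_pos.mpr hz''ne) (mul_self_pos.mpr hz'ne)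
      have hrw : ((-1:ℝ)^m * (ppow Q C x * ppow Q C z'')) * (-(ppow Q C z'' * ppow Q C z'))
            * (ppow Q C z' * ppow Q C y)
          = ((-1:ℝ)^(m+1) * (ppow Q C x * ppow Q C y))
            * ((ppow Q C z'' * ppow Q C z'') * (ppow Q C z' * ppow Q C z')) := by
        rw [pow_succ]; ring
      rw [hrw] at hprod
      by_contra hcon
      push_neg at hcon
      nlinarith [hprod, hD, hcon]
  -- counting: crossings add up
  have hNadd : ∀ x y : ℝ, x < y → (∀ j, t j ≠ x) →
      (Finset.univ.filter fun j : Fin k => t j < x).card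
        + (Finset.univ.filter fun j : Fin k => x < t j ∧ t j < y).card
      = (Finset.univ.filter fun j : Fin k => t j < y).card := by
    intro x y hxy hxT
    rw [← Finset.card_union_of_disjoint]
    · congr 1
      ext j
      simp only [Finset.mem_union, Finset.mem_filter, Finset.mem_univ, true_and]
      constructor
      · rintro (h | ⟨h1, h2⟩)
        · exact lt_trans h hxy
        · exact h2
      · intro h
        rcases lt_trichotomy (t j) x with h' | h' | h'
        · exact Or.inl h'
        · exact absurd h' (hxT j)
        · exact Or.inr ⟨h', h⟩
    · rw [Finset.disjoint_left]
      intro j hj1 hj2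
      simp only [Finset.mem_filter, Finset.mem_univ, true_and] at hj1 hj2
      linarith [hj1, hj2.1]
  -- paired positivity
  have pairaux : ∀ x y : ℝ, 0 < x → x < y → (∀ j, t j ≠ x) → (∀ j, t j ≠ y) →
      0 < ((-1:ℝ)^((Finset.univ.filter fun j : Fin k => t j < x).card) * ppow Q C x)
        * ((-1:ℝ)^((Finset.univ.filter fun j : Fin k => t j < y).card) * ppow Q C y) := by
    intro x y hx hxy hxT hyT
    have hm := Cprime _ x y hx hxy hxT hyT rfl
    have hadd := hNadd x y hxy hxT
    set Nx := (Finset.univ.filter fun j : Fin k => t j < x).card with hNx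
    set Ny := (Finset.univ.filter fun j : Fin k => t j < y).card with hNy
    set B := (Finset.univ.filter fun j : Fin k => x < t j ∧ t j < y).card with hB
    have hNy' : Ny = Nx + B := by omega
    have ha2 : (-1:ℝ)^Nx * (-1:ℝ)^Nx = 1 := by
      rw [← mul_pow]; norm_num
    have hrw : ((-1:ℝ)^Nx * ppow Q C x) * ((-1:ℝ)^Ny * ppow Q C y)
        = ((-1:ℝ)^Nx * (-1:ℝ)^Nx) * ((-1:ℝ)^B * (ppow Q C x * ppow Q C y)) := by
      rw [hNy', pow_add]; ring
    rw [hrw, ha2, one_mul]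
    exact hm
  have pairpos : ∀ x y : ℝ, 0 < x → 0 < y → (∀ j, t j ≠ x) → (∀ j, t j ≠ y) →
      0 < ((-1:ℝ)^((Finset.univ.filter fun j : Fin k => t j < x).card) * ppow Q C x)
        * ((-1:ℝ)^((Finset.univ.filter fun j : Fin k => t j < y).card) * ppow Q C y) := by
    intro x y hx hy hxT hyT
    rcases lt_trichotomy x y with h | rfl | h
    · exact pairaux x y hx h hxT hyT
    · apply mul_self_pos.mpr
      exact mul_ne_zero (pow_ne_zero _ (by norm_num)) (nonzero x hx hxT)
    · rw [mul_comm]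
      exact pairaux y x hy h hyT hxT
  -- reference point beyond all the `t j`
  set x₀ : ℝ := 1 + ∑ j : Fin k, |t j| with hx₀def
  have hx₀pos : 0 < x₀ := by
    rw [hx₀def]
    have : (0:ℝ) ≤ ∑ j : Fin k, |t j| := Finset.sum_nonneg fun j _ => abs_nonneg _
    linarith
  have hx₀T : ∀ j : Fin k, t j < x₀ := by
    intro j
    have h1 : |t j| ≤ ∑ i : Fin k, |t i| :=
      Finset.single_le_sum (fun i _ => abs_nonneg (t i)) (Finset.mem_univ j)
    have h2 : t j ≤ |t j| := le_abs_self _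
    rw [hx₀def]; linarith
  have hx₀T' : ∀ j : Fin k, t j ≠ x₀ := fun j h => absurd h (ne_of_lt (hx₀T j))
  set σ : ℝ := ε * ((-1:ℝ)^((Finset.univ.filter fun j : Fin k => t j < x₀).card)
    * ppow Q C x₀) with hσdef
  have hσne : σ ≠ 0 := by
    rw [hσdef]
    apply mul_ne_zero
    · rcases hε with rfl | rfl <;> norm_num
    · exact mul_ne_zero (pow_ne_zero _ (by norm_num)) (nonzero x₀ hx₀pos hx₀T')
  -- pointwise nonnegativity of `σ * φ * (f - g)` off `T`
  have hpos : ∀ x : ℝ, 0 < x → (∀ j, t j ≠ x) →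
      0 ≤ σ * (ppow Q C x * (f x - g x)) := by
    intro x hx hxT
    have hA := hsgn x (mem_Ioi.mpr hx) (fun j h => hxT j h.symm)
    have hB := pairpos x₀ x hx₀pos hx hx₀T' hxT
    have hm : (-1:ℝ)^((Finset.univ.filter fun j : Fin k => t j < x).card)
        * (-1:ℝ)^((Finset.univ.filter fun j : Fin k => t j < x).card) = 1 := by
      rw [← mul_pow]; norm_num
    have h2 : σ * (ppow Q C x * (f x - g x)) =
        (ε * (-1:ℝ)^((Finset.univ.filter fun j : Fin k => t j < x).card) * (f x - g x))
          * (((-1:ℝ)^((Finset.univ.filter fun j : Fin k => t j < x₀).card) * ppow Q C x₀)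
            * ((-1:ℝ)^((Finset.univ.filter fun j : Fin k => t j < x).card) * ppow Q C x))
        - ((-1:ℝ)^((Finset.univ.filter fun j : Fin k => t j < x).card)
            * (-1:ℝ)^((Finset.univ.filter fun j : Fin k => t j < x).card) - 1)
          * (ε * ((-1:ℝ)^((Finset.univ.filter fun j : Fin k => t j < x₀).card) * ppow Q C x₀)
            * (ppow Q C x * (f x - g x))) := by
      rw [hσdef]; ring
    rw [h2, hm]
    simp only [sub_self, zero_mul, sub_zero]
    exact mul_nonneg hA hB.le
  -- integrability and vanishing integral
  have hInt : ∀ i : Fin (k+1),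
      IntegrableOn (fun x : ℝ => x ^ (q i) * (f x - g x)) (Ioi 0) volume := by
    intro i
    have h1 := (hint (Fin.castLE hkn i)).1
    have h2 := (hint (Fin.castLE hkn i)).2
    have hfun : (fun x : ℝ => x ^ (q i) * (f x - g x))
        = fun x : ℝ => x ^ (p (Fin.castLE hkn i)) * f x - x ^ (p (Fin.castLE hkn i)) * g x := by
      funext x; rw [hqdef]; ring
    rw [hfun]
    exact h1.sub h2
  have hIeq : ∀ i : Fin (k+1), ∫ x in Ioi (0:ℝ), x ^ (q i) * (f x - g x) = 0 := by
    intro i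
    have hfun : (fun x : ℝ => x ^ (q i) * (f x - g x))
        = fun x : ℝ => x ^ (p (Fin.castLE hkn i)) * f x - x ^ (p (Fin.castLE hkn i)) * g x := by
      funext x; rw [hqdef]; ring
    rw [hfun, integral_sub (hint (Fin.castLE hkn i)).1 (hint (Fin.castLE hkn i)).2,
      heq (Fin.castLE hkn i), sub_self]
  set F : ℝ → ℝ := fun x => σ * (ppow Q C x * (f x - g x)) with hFdef
  have hFeq : F = fun x => ∑ i : Fin (k+1), (σ * c i) * (x ^ (q i) * (f x - g x)) := by
    funext x
    rw [hFdef]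
    simp only
    rw [hppow x, Finset.sum_mul, Finset.mul_sum]
    exact Finset.sum_congr rfl fun i _ => by ring
  have hFint : IntegrableOn F (Ioi 0) volume := by
    rw [hFeq]
    exact integrable_finset_sum _ fun i _ => (hInt i).const_mul _
  have hFzero : ∫ x in Ioi (0:ℝ), F x = 0 := by
    rw [hFeq, integral_finset_sum _ fun i _ => (hInt i).const_mul _]
    apply Finset.sum_eq_zero
    intro i _
    rw [integral_const_mul, hIeq i, mul_zero]
  have hTnull : ∀ᵐ x ∂(volume.restrict (Ioi (0:ℝ))), x ∉ Set.range t := by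
    apply Filter.Eventually.filter_mono (ae_mono Measure.restrict_le_self)
    exact measure_eq_zero_iff_ae_notMem.mp (Set.Finite.measure_zero (Set.finite_range t) _)
  have hmem : ∀ᵐ (x:ℝ) ∂(volume.restrict (Ioi (0:ℝ))), x ∈ Ioi (0:ℝ) :=
    ae_restrict_mem measurableSet_Ioi
  have hF0 : (0:ℝ→ℝ) ≤ᵐ[volume.restrict (Ioi (0:ℝ))] F := by
    filter_upwards [hTnull, hmem] with x hx1 hx2
    exact hpos x hx2 (fun j hj => hx1 ⟨j, hj⟩)
  have hael : F =ᵐ[volume.restrict (Ioi (0:ℝ))] 0 :=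
    (integral_eq_zero_iff_of_nonneg_ae hF0 hFint).mp hFzero
  have hfg : f =ᵐ[volume.restrict (Ioi (0:ℝ))] g := by
    filter_upwards [hael, hTnull, hmem] with x h1 h2 h3
    have hxT : ∀ j : Fin k, t j ≠ x := fun j hj => h2 ⟨j, hj⟩
    have hφ := nonzero x h3 hxT
    have h1' : σ * (ppow Q C x * (f x - g x)) = 0 := h1
    rcases mul_eq_zero.mp h1' with h | h
    · exact absurd h hσne
    rcases mul_eq_zero.mp h with h' | h'
    · exact absurd h' hφ
    · linarith [h']
  have hres : volume.restrict (Set.Ici (0:ℝ)) = volume.restrict (Set.Ioi (0:ℝ)) :=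
    Measure.restrict_congr_set (Filter.EventuallyEq.symm Ioi_ae_eq_Ici)
  rw [hres]
  exact hfg
end

section
/- For every $p \geq 2$, the function $h_1(x) = |x^{1/p} + 1|^p + |x^{1/p} - 1|^p$ is concave on $[0,\infty)$; for every $p \in [1,2]$, $h_1$ is convex on $[0,\infty)$. -/
open Real Set Filter Topology

lemma absRpow_hasDerivAt {q : ℝ} (hq : 1 < q) (u : ℝ) :
    HasDerivAt (fun v : ℝ => |v| ^ q) (q * (Real.sign u * |u| ^ (q - 1))) u := by
  rcases lt_trichotomy u 0 with hu | hu | hu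
  · have h : HasDerivAt (fun v : ℝ => (-v) ^ q) (q * (-u) ^ (q - 1) * (-1)) u := by
      have := (Real.hasDerivAt_rpow_const (p := q) (Or.inl (neg_ne_zero.mpr hu.ne))).comp u
        ((hasDerivAt_id u).neg)
      simpa [Function.comp_def] using this
    have h2 : (fun v : ℝ => (-v) ^ q) =ᶠ[nhds u] fun v => |v| ^ q := by
      filter_upwards [eventually_lt_nhds hu] with v hv
      rw [abs_of_neg hv]
    have := h.congr_of_eventuallyEq h2.symm
    rw [Real.sign_of_neg hu, abs_of_neg hu]
    exact this.congr_deriv (by ring)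
  · subst hu
    rw [Real.sign_zero]
    simp only [mul_zero, zero_mul]
    rw [hasDerivAt_iff_tendsto_slope]
    have hb : Tendsto (fun v : ℝ => |v| ^ (q - 1)) (nhdsWithin 0 {(0:ℝ)}ᶜ) (nhds 0) := by
      have hc : ContinuousAt (fun v : ℝ => |v| ^ (q - 1)) 0 :=
        (Real.continuousAt_rpow_const _ _ (Or.inr (by linarith))).comp continuous_abs.continuousAt
      have : Tendsto (fun v : ℝ => |v| ^ (q - 1)) (nhds 0) (nhds (|(0:ℝ)| ^ (q - 1))) := hc
      rw [abs_zero, Real.zero_rpow (by linarith : q - 1 ≠ 0)] at this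
      exact this.mono_left nhdsWithin_le_nhds
    apply squeeze_zero_norm' _ hb
    filter_upwards [self_mem_nhdsWithin] with v (hv : v ≠ 0)
    have : slope (fun v : ℝ => |v| ^ q) 0 v = |v| ^ q / v := by
      simp [slope_def_field, abs_zero, Real.zero_rpow (by linarith : q ≠ 0)]
    rw [this]
    rw [Real.norm_eq_abs, abs_div, abs_of_nonneg (Real.rpow_nonneg (abs_nonneg v) q)]
    rw [div_le_iff₀ (abs_pos.mpr hv)]
    rw [← Real.rpow_add_one (by simpa using hv : |v| ≠ 0)]
    ring_nf
    simp
  · have h : HasDerivAt (fun v : ℝ => v ^ q) (q * u ^ (q - 1)) u :=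
      Real.hasDerivAt_rpow_const (Or.inl hu.ne')
    have h2 : (fun v : ℝ => v ^ q) =ᶠ[nhds u] fun v => |v| ^ q := by
      filter_upwards [eventually_gt_nhds hu] with v hv
      rw [abs_of_pos hv]
    have := h.congr_of_eventuallyEq h2.symm
    rw [Real.sign_of_pos hu, abs_of_pos hu]
    simpa using this

lemma signRpow_hasDerivAt {q : ℝ} (hq : 1 < q) (u : ℝ) :
    HasDerivAt (fun v : ℝ => Real.sign v * |v| ^ q) (q * |u| ^ (q - 1)) u := by
  rcases lt_trichotomy u 0 with hu | hu | hu
  · have h : HasDerivAt (fun v : ℝ => -((-v) ^ q)) (-(q * (-u) ^ (q - 1) * (-1))) u := by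
      have := ((Real.hasDerivAt_rpow_const (p := q) (Or.inl (neg_ne_zero.mpr hu.ne))).comp u
        ((hasDerivAt_id u).neg)).neg
      exact this
    have h2 : (fun v : ℝ => -((-v) ^ q)) =ᶠ[nhds u] fun v => Real.sign v * |v| ^ q := by
      filter_upwards [eventually_lt_nhds hu] with v hv
      rw [abs_of_neg hv, Real.sign_of_neg hv]; ring
    have := h.congr_of_eventuallyEq h2.symm
    rw [abs_of_neg hu]
    exact this.congr_deriv (by ring)
  · subst hu
    rw [abs_zero, Real.zero_rpow (by linarith : q - 1 ≠ 0), mul_zero]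
    rw [hasDerivAt_iff_tendsto_slope]
    have hb : Tendsto (fun v : ℝ => |v| ^ (q - 1)) (nhdsWithin 0 {(0:ℝ)}ᶜ) (nhds 0) := by
      have hc : ContinuousAt (fun v : ℝ => |v| ^ (q - 1)) 0 :=
        (Real.continuousAt_rpow_const _ _ (Or.inr (by linarith))).comp continuous_abs.continuousAt
      have : Tendsto (fun v : ℝ => |v| ^ (q - 1)) (nhds 0) (nhds (|(0:ℝ)| ^ (q - 1))) := hc
      rw [abs_zero, Real.zero_rpow (by linarith : q - 1 ≠ 0)] at this
      exact this.mono_left nhdsWithin_le_nhds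
    apply squeeze_zero_norm' _ hb
    filter_upwards [self_mem_nhdsWithin] with v (hv : v ≠ 0)
    have : slope (fun v : ℝ => Real.sign v * |v| ^ q) 0 v = Real.sign v * |v| ^ q / v := by
      simp [slope_def_field]
    rw [this, Real.norm_eq_abs, abs_div, abs_mul,
      abs_of_nonneg (Real.rpow_nonneg (abs_nonneg v) q)]
    have hs : |Real.sign v| = 1 := by
      rcases lt_or_gt_of_ne hv with h|h
      · rw [Real.sign_of_neg h]; norm_num
      · rw [Real.sign_of_pos h]; norm_num
    rw [hs, one_mul, div_le_iff₀ (abs_pos.mpr hv),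
      ← Real.rpow_add_one (by simpa using hv : |v| ≠ 0)]
    ring_nf
    simp
  · have h : HasDerivAt (fun v : ℝ => v ^ q) (q * u ^ (q - 1)) u :=
      Real.hasDerivAt_rpow_const (Or.inl hu.ne')
    have h2 : (fun v : ℝ => v ^ q) =ᶠ[nhds u] fun v => Real.sign v * |v| ^ q := by
      filter_upwards [eventually_gt_nhds hu] with v hv
      rw [abs_of_pos hv, Real.sign_of_pos hv, one_mul]
    have := h.congr_of_eventuallyEq h2.symm
    rw [abs_of_pos hu]
    simpa using this

noncomputable def myf (p : ℝ) (x : ℝ) : ℝ := |x ^ (1/p) + 1| ^ p + |x ^ (1/p) - 1| ^ p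

noncomputable def mydf (p : ℝ) (x : ℝ) : ℝ :=
  (Real.sign (x ^ (1/p) + 1) * |x ^ (1/p) + 1| ^ (p - 1)
    + Real.sign (x ^ (1/p) - 1) * |x ^ (1/p) - 1| ^ (p - 1)) * x ^ (1/p - 1)

noncomputable def psi (p : ℝ) (s : ℝ) : ℝ :=
  (1 + s) ^ (p - 1) + Real.sign (1 - s) * |1 - s| ^ (p - 1)

lemma cont_rpow {q : ℝ} (hq : 0 ≤ q) : Continuous fun v : ℝ => v ^ q :=
  continuous_iff_continuousAt.mpr fun x => Real.continuousAt_rpow_const x q (Or.inr hq)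

lemma myf_hasDerivAt {p : ℝ} (hp : 1 < p) {x : ℝ} (hx : 0 < x) :
    HasDerivAt (myf p) (mydf p x) x := by
  have hp0 : p ≠ 0 := by linarith
  set t := x ^ (1/p) with ht
  have hg : HasDerivAt (fun x : ℝ => x ^ (1/p)) (1/p * x ^ (1/p - 1)) x :=
    Real.hasDerivAt_rpow_const (Or.inl hx.ne')
  have h1 : HasDerivAt (fun u : ℝ => |u + 1| ^ p)
      (p * (Real.sign (t + 1) * |t + 1| ^ (p - 1))) t := by
    have := (absRpow_hasDerivAt hp (t + 1)).comp t ((hasDerivAt_id t).add_const 1)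
    simpa [Function.comp_def] using this
  have h2 : HasDerivAt (fun u : ℝ => |u - 1| ^ p)
      (p * (Real.sign (t - 1) * |t - 1| ^ (p - 1))) t := by
    have := (absRpow_hasDerivAt hp (t - 1)).comp t ((hasDerivAt_id t).sub_const 1)
    simpa [Function.comp_def] using this
  have H := ((h1.add h2).comp x hg)
  have : myf p = (fun u : ℝ => |u + 1| ^ p + |u - 1| ^ p) ∘ (fun x : ℝ => x ^ (1/p)) := rfl
  rw [this]
  refine H.congr_deriv ?_
  unfold mydf
  rw [← ht]
  field_simp

lemma mydf_eq_psi {p x : ℝ} (hp : 1 < p) (hx : 0 < x) :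
    mydf p x = psi p (x ^ (-(1/p))) := by
  have hp0 : p ≠ 0 := by linarith
  have ht : 0 < x ^ (1/p) := Real.rpow_pos_of_pos hx _
  set t := x ^ (1/p) with htdef
  have hxe : x ^ (-(1/p)) = t⁻¹ := by rw [Real.rpow_neg hx.le]
  have htp : t ^ p = x := by
    rw [htdef, ← Real.rpow_mul hx.le, one_div, inv_mul_cancel₀ hp0, Real.rpow_one]
  have h1 : x ^ (1/p - 1) = t / x := by rw [Real.rpow_sub hx, Real.rpow_one]
  have htq : t ^ (p - 1) = x / t := by rw [Real.rpow_sub ht, Real.rpow_one, htp]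
  have e1 : (1 : ℝ) + t⁻¹ = (t + 1)/t := by field_simp
  have e2 : (1 : ℝ) - t⁻¹ = (t - 1)/t := by field_simp
  have hsgn : Real.sign ((t - 1)/t) = Real.sign (t - 1) := by
    rcases lt_trichotomy t 1 with h|h|h
    · rw [Real.sign_of_neg (div_neg_of_neg_of_pos (by linarith) ht),
        Real.sign_of_neg (by linarith)]
    · rw [h]; simp
    · rw [Real.sign_of_pos (div_pos (by linarith) ht), Real.sign_of_pos (by linarith)]
  unfold mydf psi
  rw [← htdef, hxe, Real.sign_of_pos (by linarith : (0:ℝ) < t + 1),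
    abs_of_pos (by linarith : (0:ℝ) < t + 1), e1, e2,
    Real.div_rpow (by linarith) ht.le, hsgn, abs_div, abs_of_pos ht,
    Real.div_rpow (abs_nonneg _) ht.le, htq, h1]
  field_simp

lemma psi_two (s : ℝ) : psi 2 s = 2 := by
  unfold psi
  norm_num
  rcases lt_trichotomy s 1 with h|h|h
  · rw [Real.sign_of_pos (by linarith : (0:ℝ) < 1 - s), abs_of_pos (by linarith)]; ring
  · rw [h]; norm_num
  · rw [Real.sign_of_neg (by linarith : 1 - s < 0), abs_of_neg (by linarith)]; ring

lemma psi_hasDerivAt {p : ℝ} (hp : 2 < p) {s : ℝ} (hs : 0 < s) :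
    HasDerivAt (psi p) ((p-1) * (1+s)^(p-2) - (p-1) * |1-s|^(p-2)) s := by
  have h1 : HasDerivAt (fun s : ℝ => (1+s)^(p-1)) ((p-1) * (1+s)^(p-2)) s := by
    have := (Real.hasDerivAt_rpow_const (p := p-1)
      (Or.inl (by linarith : (1:ℝ)+s ≠ 0))).comp s ((hasDerivAt_id s).const_add 1)
    have e : p - 1 - 1 = p - 2 := by ring
    simpa [e, Function.comp_def] using this
  have h2 : HasDerivAt (fun s : ℝ => Real.sign (1-s) * |1-s|^(p-1))
      (-((p-1) * |1-s|^(p-2))) s := by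
    have := (signRpow_hasDerivAt (q := p-1) (by linarith) (1-s)).comp s
      ((hasDerivAt_const s (1:ℝ)).sub (hasDerivAt_id s))
    have e : p - 1 - 1 = p - 2 := by ring
    exact this.congr_deriv (by rw [e]; ring)
  have := h1.add h2
  exact this.congr_deriv (by ring)

lemma psi_mono {p : ℝ} (hp : 2 ≤ p) : MonotoneOn (psi p) (Ioi (0:ℝ)) := by
  rcases eq_or_lt_of_le hp with h|h
  · subst h
    intro a _ b _ _
    rw [psi_two, psi_two]
  · have hdiff : ∀ s ∈ interior (Ioi (0:ℝ)), HasDerivAt (psi p)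
        ((p-1) * (1+s)^(p-2) - (p-1) * |1-s|^(p-2)) s := by
      rw [interior_Ioi]; exact fun s hs => psi_hasDerivAt h hs
    apply monotoneOn_of_deriv_nonneg (convex_Ioi 0)
    · exact fun s hs =>
        ((psi_hasDerivAt h hs).differentiableAt.continuousAt).continuousWithinAt
    · rw [interior_Ioi]
      exact fun s hs => (psi_hasDerivAt h hs).differentiableAt.differentiableWithinAt
    · intro s hs
      rw [interior_Ioi] at hs
      rw [(psi_hasDerivAt h hs).deriv]
      have hs0 : (0:ℝ) < s := hs
      have habs : |1 - s| ≤ 1 + s := by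
        rw [abs_le]; constructor <;> linarith
      have := Real.rpow_le_rpow (abs_nonneg (1-s)) habs (by linarith : (0:ℝ) ≤ p - 2)
      nlinarith [this]

lemma psi_anti {p : ℝ} (hp1 : 1 < p) (hp2 : p ≤ 2) : AntitoneOn (psi p) (Ioi (0:ℝ)) := by
  rcases eq_or_lt_of_le hp2 with h|h
  · subst h
    intro a _ b _ _
    rw [psi_two, psi_two]
  · have hq : 0 < p - 1 := by linarith
    -- piece 1 on Ioc 0 1
    set φ₁ : ℝ → ℝ := fun s => (1+s)^(p-1) + (1-s)^(p-1) with hφ₁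
    have heq1 : ∀ s ∈ Ioc (0:ℝ) 1, psi p s = φ₁ s := by
      intro s hs
      rcases eq_or_lt_of_le hs.2 with h1|h1
      · subst h1
        unfold psi
        rw [hφ₁]
        norm_num [Real.sign_zero, Real.zero_rpow (by linarith : p - 1 ≠ 0)]
      · unfold psi
        rw [Real.sign_of_pos (by linarith : (0:ℝ) < 1 - s), abs_of_pos (by linarith), one_mul]
    have hanti1 : AntitoneOn φ₁ (Ioc (0:ℝ) 1) := by
      have hdiff : ∀ s ∈ Ioo (0:ℝ) 1, HasDerivAt φ₁
          ((p-1) * (1+s)^(p-2) - (p-1) * (1-s)^(p-2)) s := by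
        intro s hs
        have h1 : HasDerivAt (fun s : ℝ => (1+s)^(p-1)) ((p-1) * (1+s)^(p-2)) s := by
          have := (Real.hasDerivAt_rpow_const (p := p-1)
            (Or.inl (by linarith [hs.1] : (1:ℝ)+s ≠ 0))).comp s ((hasDerivAt_id s).const_add 1)
          have e : p - 1 - 1 = p - 2 := by ring
          simpa [e, Function.comp_def] using this
        have h2 : HasDerivAt (fun s : ℝ => (1-s)^(p-1)) (-((p-1) * (1-s)^(p-2))) s := by
          have := (Real.hasDerivAt_rpow_const (p := p-1)
            (Or.inl (by linarith [hs.2] : (1:ℝ)-s ≠ 0))).comp s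
            ((hasDerivAt_const s (1:ℝ)).sub (hasDerivAt_id s))
          have e : p - 1 - 1 = p - 2 := by ring
          exact this.congr_deriv (by rw [e]; ring)
        exact (h1.add h2).congr_deriv (by ring)
      apply antitoneOn_of_deriv_nonpos (convex_Ioc 0 1)
      · apply Continuous.continuousOn
        exact ((cont_rpow (by linarith)).comp (by fun_prop)).add
          ((cont_rpow (by linarith)).comp (by fun_prop))
      · rw [interior_Ioc]
        exact fun s hs => (hdiff s hs).differentiableAt.differentiableWithinAt
      · intro s hs
        rw [interior_Ioc] at hs
        rw [(hdiff s hs).deriv]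
        have h1s : 0 < 1 - s := by linarith [hs.2]
        have := Real.rpow_le_rpow_of_nonpos h1s (by linarith [hs.1] : 1 - s ≤ 1 + s)
          (by linarith : p - 2 ≤ 0)
        nlinarith
    -- piece 2 on Ici 1
    set φ₂ : ℝ → ℝ := fun s => (1+s)^(p-1) - (s-1)^(p-1) with hφ₂
    have heq2 : ∀ s ∈ Ici (1:ℝ), psi p s = φ₂ s := by
      intro s hs
      rcases eq_or_lt_of_le (mem_Ici.mp hs) with h1|h1
      · rw [← h1]
        unfold psi
        rw [hφ₂]
        norm_num [Real.sign_zero, Real.zero_rpow (by linarith : p - 1 ≠ 0)]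
      · unfold psi
        rw [Real.sign_of_neg (by linarith : 1 - s < 0), abs_of_neg (by linarith)]
        simp only [hφ₂]
        ring_nf
    have hanti2 : AntitoneOn φ₂ (Ici (1:ℝ)) := by
      have hdiff : ∀ s ∈ Ioi (1:ℝ), HasDerivAt φ₂
          ((p-1) * (1+s)^(p-2) - (p-1) * (s-1)^(p-2)) s := by
        intro s hs
        have hs1 : (1:ℝ) < s := hs
        have h1 : HasDerivAt (fun s : ℝ => (1+s)^(p-1)) ((p-1) * (1+s)^(p-2)) s := by
          have := (Real.hasDerivAt_rpow_const (p := p-1)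
            (Or.inl (by linarith : (1:ℝ)+s ≠ 0))).comp s ((hasDerivAt_id s).const_add 1)
          have e : p - 1 - 1 = p - 2 := by ring
          simpa [e, Function.comp_def] using this
        have h2 : HasDerivAt (fun s : ℝ => (s-1)^(p-1)) ((p-1) * (s-1)^(p-2)) s := by
          have := (Real.hasDerivAt_rpow_const (p := p-1)
            (Or.inl (by linarith : s-(1:ℝ) ≠ 0))).comp s ((hasDerivAt_id s).sub_const 1)
          have e : p - 1 - 1 = p - 2 := by ring
          simpa [e, Function.comp_def] using this
        exact h1.sub h2
      apply antitoneOn_of_deriv_nonpos (convex_Ici 1)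
      · apply Continuous.continuousOn
        exact ((cont_rpow (by linarith)).comp (by fun_prop)).sub
          ((cont_rpow (by linarith)).comp (by fun_prop))
      · rw [interior_Ici]
        exact fun s hs => (hdiff s hs).differentiableAt.differentiableWithinAt
      · intro s hs
        rw [interior_Ici] at hs
        rw [(hdiff s hs).deriv]
        have hs1 : (1:ℝ) < s := hs
        have := Real.rpow_le_rpow_of_nonpos (by linarith : (0:ℝ) < s - 1)
          (by linarith : s - 1 ≤ 1 + s) (by linarith : p - 2 ≤ 0)
        nlinarith
    -- glue
    intro a ha b hb hab
    have ha0 : (0:ℝ) < a := ha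
    have hb0 : (0:ℝ) < b := hb
    rcases le_total b 1 with hb1 | hb1
    · rw [heq1 a ⟨ha0, le_trans hab hb1⟩, heq1 b ⟨hb0, hb1⟩]
      exact hanti1 ⟨ha0, le_trans hab hb1⟩ ⟨hb0, hb1⟩ hab
    · rcases le_total a 1 with ha1 | ha1
      · calc psi p b ≤ psi p 1 := by
              rw [heq2 b hb1, heq2 1 self_mem_Ici]
              exact hanti2 self_mem_Ici (mem_Ici.mpr hb1) hb1
          _ ≤ psi p a := by
              rw [heq1 1 ⟨one_pos, le_rfl⟩, heq1 a ⟨ha0, ha1⟩]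
              exact hanti1 ⟨ha0, ha1⟩ ⟨one_pos, le_rfl⟩ ha1
      · rw [heq2 a ha1, heq2 b hb1]
        exact hanti2 ha1 hb1 hab

lemma myf_continuous {p : ℝ} (hp : 0 < p) : Continuous (myf p) := by
  have h0 : (0:ℝ) ≤ 1/p := by positivity
  have c0 : Continuous fun x : ℝ => x ^ (1/p) := cont_rpow h0
  exact ((cont_rpow hp.le).comp ((c0.add continuous_const).abs)).add
    ((cont_rpow hp.le).comp ((c0.sub continuous_const).abs))

lemma mydf_anti {p : ℝ} (hp : 2 ≤ p) : AntitoneOn (mydf p) (Ioi (0:ℝ)) := by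
  intro x hx y hy hxy
  have hp1 : 1 < p := by linarith
  have hx0 : (0:ℝ) < x := hx
  have hy0 : (0:ℝ) < y := hy
  rw [mydf_eq_psi hp1 hx0, mydf_eq_psi hp1 hy0]
  exact psi_mono hp (Real.rpow_pos_of_pos hy0 _) (Real.rpow_pos_of_pos hx0 _)
    (Real.rpow_le_rpow_of_nonpos hx0 hxy (neg_nonpos.mpr (by positivity)))

lemma mydf_mono {p : ℝ} (hp1 : 1 < p) (hp2 : p ≤ 2) : MonotoneOn (mydf p) (Ioi (0:ℝ)) := by
  intro x hx y hy hxy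
  have hx0 : (0:ℝ) < x := hx
  have hy0 : (0:ℝ) < y := hy
  rw [mydf_eq_psi hp1 hx0, mydf_eq_psi hp1 hy0]
  exact psi_anti hp1 hp2 (Real.rpow_pos_of_pos hy0 _) (Real.rpow_pos_of_pos hx0 _)
    (Real.rpow_le_rpow_of_nonpos hx0 hxy (neg_nonpos.mpr (by positivity)))

lemma myf_concave {p : ℝ} (hp : 2 ≤ p) : ConcaveOn ℝ (Ici (0:ℝ)) (myf p) := by
  have hp1 : 1 < p := by linarith
  apply AntitoneOn.concaveOn_of_deriv (convex_Ici 0)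
    ((myf_continuous (by linarith)).continuousOn)
  · rw [interior_Ici]
    exact fun x hx => (myf_hasDerivAt hp1 hx).differentiableAt.differentiableWithinAt
  · rw [interior_Ici]
    intro x hx y hy hxy
    rw [(myf_hasDerivAt hp1 hx).deriv, (myf_hasDerivAt hp1 hy).deriv]
    exact mydf_anti hp hx hy hxy

lemma myf_convex {p : ℝ} (hp1 : 1 < p) (hp2 : p ≤ 2) : ConvexOn ℝ (Ici (0:ℝ)) (myf p) := by
  apply MonotoneOn.convexOn_of_deriv (convex_Ici 0)
    ((myf_continuous (by linarith)).continuousOn)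
  · rw [interior_Ici]
    exact fun x hx => (myf_hasDerivAt hp1 hx).differentiableAt.differentiableWithinAt
  · rw [interior_Ici]
    intro x hx y hy hxy
    rw [(myf_hasDerivAt hp1 hx).deriv, (myf_hasDerivAt hp1 hy).deriv]
    exact mydf_mono hp1 hp2 hx hy hxy

lemma abs_affine_convex (c : ℝ) : ConvexOn ℝ (Ici (0:ℝ)) (fun x => |x + c|) := by
  refine ⟨convex_Ici 0, fun x _ y _ a b ha hb hab => ?_⟩
  simp only [smul_eq_mul]
  have h : a * x + b * y + c = a * (x + c) + b * (y + c) := by linear_combination (-c) * hab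
  rw [h]
  calc |a * (x + c) + b * (y + c)| ≤ |a * (x + c)| + |b * (y + c)| := abs_add_le _ _
    _ = a * |x + c| + b * |y + c| := by
        rw [abs_mul, abs_mul, abs_of_nonneg ha, abs_of_nonneg hb]

lemma myf_one_convex : ConvexOn ℝ (Ici (0:ℝ)) (myf 1) := by
  have heq : EqOn (myf 1) (fun x => |x + 1| + |x + (-1)|) (Ici 0) := by
    intro x _
    unfold myf
    norm_num [Real.rpow_one, sub_eq_add_neg]
  exact (((abs_affine_convex 1).add (abs_affine_convex (-1))).congr heq.symm)

/-- The function `h₁(x) = |x^{1/p}+1|^p + |x^{1/p}-1|^p` is concave on `[0,∞)` for `p ≥ 2`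
and convex on `[0,∞)` for `p ∈ [1,2]`. -/
theorem stmt_4 (p : ℝ)
    (h₁ : ℝ → ℝ) (hh₁ : ∀ x : ℝ, 0 ≤ x →
      h₁ x = |x ^ (1/p) + 1| ^ p + |x ^ (1/p) - 1| ^ p) :
    (2 ≤ p → ConcaveOn ℝ (Set.Ici 0) h₁) ∧
    (1 ≤ p → p ≤ 2 → ConvexOn ℝ (Set.Ici 0) h₁) := by
  have heq : EqOn (myf p) h₁ (Ici 0) := fun x hx => (hh₁ x hx).symm
  constructor
  · intro hp
    exact (myf_concave hp).congr heq
  · intro hp1 hp2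
    rcases eq_or_lt_of_le hp1 with h|h
    · subst h
      exact myf_one_convex.congr heq
    · exact (myf_convex h hp2).congr heq
end

section
/- If $X$ and $Y$ are independent symmetric unimodal real random variables, then $X + Y$ is symmetric unimodal. -/
open Real Set MeasureTheory ProbabilityTheory
open scoped ENNReal

section Aux

variable {f g : ℝ → ℝ}

lemma even_abs_eq (hfeven : ∀ x, f (-x) = f x) (x : ℝ) : f |x| = f x := by
  rcases abs_cases x with ⟨h, _⟩ | ⟨h, _⟩
  · rw [h]
  · rw [h, hfeven]

lemma even_anti_le (hfeven : ∀ x, f (-x) = f x) (hfmono : AntitoneOn f (Set.Ici 0))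
    {s t : ℝ} (h : |s| ≤ |t|) : f t ≤ f s := by
  rw [← even_abs_eq hfeven s, ← even_abs_eq hfeven t]
  exact hfmono (Set.mem_Ici.2 (abs_nonneg s)) (Set.mem_Ici.2 (le_trans (abs_nonneg s) h)) h

/-- The key monotonicity of the convolution, via reflection about `(a+b)/2`. -/
lemma conv_anti (hfmeas : Measurable f) (hgmeas : Measurable g)
    (hf0 : ∀ x, 0 ≤ f x) (hg0 : ∀ x, 0 ≤ g x)
    (hfeven : ∀ x, f (-x) = f x) (hgeven : ∀ x, g (-x) = g x)
    (hfmono : AntitoneOn f (Set.Ici 0)) (hgmono : AntitoneOn g (Set.Ici 0)) :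
    AntitoneOn (fun x => ∫⁻ y, ENNReal.ofReal (f (x - y) * g y)) (Set.Ici 0) := by
  intro a ha b hb hab
  simp only [Set.mem_Ici] at ha hb
  set c : ℝ := (a + b) / 2 with hc
  have hc0 : 0 ≤ c := by positivity
  have hmp : MeasurePreserving (fun t : ℝ => (a + b) - t) volume volume :=
    Measure.measurePreserving_sub_left volume (a + b)
  -- reflection identity: for z ∈ {a, b},
  -- ∫_{y<c} f(z-y) g(y) dy = ∫_{y>c} f((a+b-z)-y) g(a+b-y) dy
  have refl : ∀ z : ℝ,
      (∫⁻ y in Set.Iio c, ENNReal.ofReal (f (z - y) * g y))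
        = ∫⁻ y in Set.Ioi c, ENNReal.ofReal (f ((a + b - z) - y) * g (a + b - y)) := by
    intro z
    have hind : Measurable fun y => (Set.Iio c).indicator
        (fun y => ENNReal.ofReal (f (z - y) * g y)) y :=
      (ENNReal.measurable_ofReal.comp
        ((hfmeas.comp (measurable_const.sub measurable_id)).mul hgmeas)).indicator
        measurableSet_Iio
    rw [← lintegral_indicator measurableSet_Iio, ← lintegral_indicator measurableSet_Ioi,
      ← hmp.lintegral_comp hind]
    congr 1
    funext y
    by_cases hy : c < y
    · have h1 : a + b - y < c := by simp only [hc] at *; linarith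
      have h2 : f (z - (a + b - y)) = f ((a + b - z) - y) := by
        rw [← hfeven]; ring_nf
      simp [Set.indicator_of_mem, Set.mem_Iio.2 h1, Set.mem_Ioi.2 hy, h2]
    · have h1 : ¬ (a + b - y < c) := by simp only [hc] at *; intro h; apply hy; linarith
      simp [Set.indicator_of_notMem, h1, hy, Set.mem_Iio, Set.mem_Ioi]
  -- split the line at c, using that {c} is null
  have hsplit : ∀ z : ℝ, (∫⁻ y, ENNReal.ofReal (f (z - y) * g y))
      = (∫⁻ y in Set.Iio c, ENNReal.ofReal (f (z - y) * g y))
        + ∫⁻ y in Set.Ioi c, ENNReal.ofReal (f (z - y) * g y) := by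
    intro z
    rw [← lintegral_add_compl (fun y => ENNReal.ofReal (f (z - y) * g y)) measurableSet_Iio,
      compl_Iio]
    congr 1
    exact setLIntegral_congr Ioi_ae_eq_Ici.symm
  have hmeasAD : Measurable fun y => ENNReal.ofReal (f (a - y) * g (a + b - y)) :=
    (ENNReal.measurable_ofReal.comp
      ((hfmeas.comp (measurable_const.sub measurable_id)).mul
        (hgmeas.comp (measurable_const.sub measurable_id))))
  have hmeasBD : Measurable fun y => ENNReal.ofReal (f (b - y) * g (a + b - y)) :=
    (ENNReal.measurable_ofReal.comp
      ((hfmeas.comp (measurable_const.sub measurable_id)).mul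
        (hgmeas.comp (measurable_const.sub measurable_id))))
  have hmeasBC : Measurable fun y => ENNReal.ofReal (f (b - y) * g y) :=
    (ENNReal.measurable_ofReal.comp
      ((hfmeas.comp (measurable_const.sub measurable_id)).mul hgmeas))
  have hmeasAC : Measurable fun y => ENNReal.ofReal (f (a - y) * g y) :=
    (ENNReal.measurable_ofReal.comp
      ((hfmeas.comp (measurable_const.sub measurable_id)).mul hgmeas))
  have hreflb := refl b
  have hrefla := refl a
  have hab' : a + b - b = a := by ring
  have hab'' : a + b - a = b := by ring
  rw [hab'] at hreflb
  rw [hab''] at hrefla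
  -- now compare the two integrals over Ioi c
  simp only
  rw [hsplit b, hsplit a, hreflb, hrefla, ← lintegral_add_left hmeasAD,
    ← lintegral_add_left hmeasBD]
  apply setLIntegral_mono' measurableSet_Ioi
  intro y hy
  have hy' : c < y := hy
  -- pointwise rearrangement inequality
  have hA : f (a - y) ≤ f (b - y) := by
    apply even_anti_le hfeven hfmono
    rcases abs_cases (a - y) with ⟨h1, h2⟩ | ⟨h1, h2⟩ <;>
      rcases abs_cases (b - y) with ⟨h3, h4⟩ | ⟨h3, h4⟩ <;> simp only [hc] at hy' <;> linarith
  have hC : g y ≤ g (a + b - y) := by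
    apply even_anti_le hgeven hgmono
    rcases abs_cases (a + b - y) with ⟨h1, h2⟩ | ⟨h1, h2⟩ <;>
      rcases abs_cases y with ⟨h3, h4⟩ | ⟨h3, h4⟩ <;> simp only [hc] at hy' <;> linarith
  have key : f (a - y) * g (a + b - y) + f (b - y) * g y
      ≤ f (b - y) * g (a + b - y) + f (a - y) * g y := by
    nlinarith [mul_nonneg (sub_nonneg.2 hA) (sub_nonneg.2 hC)]
  calc ENNReal.ofReal (f (a - y) * g (a + b - y)) + ENNReal.ofReal (f (b - y) * g y)
      = ENNReal.ofReal (f (a - y) * g (a + b - y) + f (b - y) * g y) := by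
        rw [ENNReal.ofReal_add (mul_nonneg (hf0 _) (hg0 _)) (mul_nonneg (hf0 _) (hg0 _))]
    _ ≤ ENNReal.ofReal (f (b - y) * g (a + b - y) + f (a - y) * g y) :=
        ENNReal.ofReal_le_ofReal key
    _ = ENNReal.ofReal (f (b - y) * g (a + b - y)) + ENNReal.ofReal (f (a - y) * g y) := by
        rw [ENNReal.ofReal_add (mul_nonneg (hf0 _) (hg0 _)) (mul_nonneg (hf0 _) (hg0 _))]

end Aux

/-- The sum of two independent symmetric unimodal random variables is symmetric unimodal. -/
theorem stmt_8 {Ω : Type*} [MeasureSpace Ω] [IsProbabilityMeasure (ℙ : Measure Ω)]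
    (X Y : Ω → ℝ) (hX : Measurable X) (hY : Measurable Y) (hindep : IndepFun X Y)
    (f g : ℝ → ℝ) (hfmeas : Measurable f) (hgmeas : Measurable g)
    (hf0 : ∀ x, 0 ≤ f x) (hg0 : ∀ x, 0 ≤ g x)
    (hfdens : (ℙ : Measure Ω).map X = volume.withDensity (fun x => ENNReal.ofReal (f x)))
    (hgdens : (ℙ : Measure Ω).map Y = volume.withDensity (fun x => ENNReal.ofReal (g x)))
    (hfeven : ∀ x, f (-x) = f x) (hgeven : ∀ x, g (-x) = g x)
    (hfmono : AntitoneOn f (Set.Ici 0)) (hgmono : AntitoneOn g (Set.Ici 0)) :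
    ∃ h : ℝ → ℝ, Measurable h ∧ (∀ x, 0 ≤ h x) ∧
      (ℙ : Measure Ω).map (fun ω => X ω + Y ω) =
        volume.withDensity (fun x => ENNReal.ofReal (h x)) ∧
      (∀ x, h (-x) = h x) ∧ AntitoneOn h (Set.Ici 0) := by
  classical
  set H : ℝ → ℝ≥0∞ := fun x => ∫⁻ y, ENNReal.ofReal (f (x - y) * g y) with hH
  -- measurability of H
  have hker : Measurable fun p : ℝ × ℝ => ENNReal.ofReal (f (p.1 - p.2) * g p.2) :=
    ENNReal.measurable_ofReal.comp
      ((hfmeas.comp (measurable_fst.sub measurable_snd)).mul (hgmeas.comp measurable_snd))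
  have hHmeas : Measurable H := Measurable.lintegral_prod_right' hker
  -- total mass of g is 1
  have hgint : (∫⁻ y, ENNReal.ofReal (g y)) = 1 := by
    have h1 : (ℙ : Measure Ω).map Y Set.univ = 1 := by
      rw [Measure.map_apply hY MeasurableSet.univ]; simp
    rw [hgdens, withDensity_apply _ MeasurableSet.univ] at h1
    simpa using h1
  -- f is bounded by f 0
  have hfbdd : ∀ t : ℝ, f t ≤ f 0 := fun t =>
    even_anti_le hfeven hfmono (by simp)
  -- H is finite everywhere
  have hgm1 : Measurable fun y : ℝ => ENNReal.ofReal (g y) := hgmeas.ennreal_ofReal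
  have hHfin : ∀ x, H x ≠ ⊤ := by
    intro x
    have hle : H x ≤ ENNReal.ofReal (f 0) := by
      calc H x ≤ ∫⁻ y, ENNReal.ofReal (f 0) * ENNReal.ofReal (g y) := by
            apply lintegral_mono
            intro y
            calc ENNReal.ofReal (f (x - y) * g y)
                ≤ ENNReal.ofReal (f 0 * g y) :=
                  ENNReal.ofReal_le_ofReal (mul_le_mul_of_nonneg_right (hfbdd _) (hg0 _))
              _ = ENNReal.ofReal (f 0) * ENNReal.ofReal (g y) := ENNReal.ofReal_mul (hf0 _)
        _ = ENNReal.ofReal (f 0) * ∫⁻ y, ENNReal.ofReal (g y) := lintegral_const_mul _ hgm1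
        _ = ENNReal.ofReal (f 0) := by rw [hgint, mul_one]
    exact ne_top_of_le_ne_top (by simp) hle
  -- H is even
  have hHeven : ∀ x, H (-x) = H x := by
    intro x
    have hmpneg : MeasurePreserving (Neg.neg : ℝ → ℝ) volume volume :=
      Measure.measurePreserving_neg volume
    have hint : Measurable fun y => ENNReal.ofReal (f (x - y) * g y) :=
      ENNReal.measurable_ofReal.comp
        ((hfmeas.comp (measurable_const.sub measurable_id)).mul hgmeas)
    calc H (-x) = ∫⁻ y, ENNReal.ofReal (f (x - (-y)) * g (-y)) := by
          simp only [hH]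
          congr 1; funext y
          have : f (-x - y) = f (x + y) := by rw [← hfeven (x + y)]; ring_nf
          rw [this, hgeven]
          congr 2; ring
      _ = ∫⁻ y, ENNReal.ofReal (f (x - y) * g y) := hmpneg.lintegral_comp hint
  -- H is antitone on [0, ∞)
  have hHanti : AntitoneOn H (Set.Ici 0) :=
    conv_anti hfmeas hgmeas hf0 hg0 hfeven hgeven hfmono hgmono
  -- the law of the sum is withDensity H
  have hlaw : (ℙ : Measure Ω).map (fun ω => X ω + Y ω) = volume.withDensity H := by
    have hpair : (ℙ : Measure Ω).map (fun ω => (X ω, Y ω))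
        = ((ℙ : Measure Ω).map X).prod ((ℙ : Measure Ω).map Y) :=
      (indepFun_iff_map_prod_eq_prod_map_map hX.aemeasurable hY.aemeasurable).mp hindep
    have hcomp : (ℙ : Measure Ω).map (fun ω => X ω + Y ω)
        = (((ℙ : Measure Ω).map X).prod ((ℙ : Measure Ω).map Y)).map
            (fun p : ℝ × ℝ => p.1 + p.2) := by
      rw [← hpair, Measure.map_map (show Measurable (fun p : ℝ × ℝ => p.1 + p.2) from measurable_fst.add measurable_snd) (hX.prodMk hY)]
      rfl
    -- product of the densities
    have hK : Measurable fun p : ℝ × ℝ => ENNReal.ofReal (f p.1) * ENNReal.ofReal (g p.2) :=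
      (ENNReal.measurable_ofReal.comp (hfmeas.comp measurable_fst)).mul
        (ENNReal.measurable_ofReal.comp (hgmeas.comp measurable_snd))
    haveI : IsProbabilityMeasure ((ℙ : Measure Ω).map X) :=
      Measure.isProbabilityMeasure_map hX.aemeasurable
    haveI : IsProbabilityMeasure ((ℙ : Measure Ω).map Y) :=
      Measure.isProbabilityMeasure_map hY.aemeasurable
    have hprod : ((ℙ : Measure Ω).map X).prod ((ℙ : Measure Ω).map Y)
        = ((volume : Measure ℝ).prod volume).withDensity
            (fun p => ENNReal.ofReal (f p.1) * ENNReal.ofReal (g p.2)) := by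
      refine Measure.prod_eq fun s t hs ht => ?_
      rw [hfdens, hgdens, withDensity_apply _ (hs.prod ht), ← Measure.prod_restrict,
        lintegral_prod_mul hfmeas.ennreal_ofReal.aemeasurable
          hgmeas.ennreal_ofReal.aemeasurable,
        withDensity_apply _ hs, withDensity_apply _ ht]
    rw [hcomp, hprod]
    ext s hs
    rw [Measure.map_apply (show Measurable (fun p : ℝ × ℝ => p.1 + p.2) from measurable_fst.add measurable_snd) hs,
      withDensity_apply _ (hs.preimage (show Measurable (fun p : ℝ × ℝ => p.1 + p.2) from measurable_fst.add measurable_snd)),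
      withDensity_apply _ hs, ← lintegral_indicator
        (hs.preimage (show Measurable (fun p : ℝ × ℝ => p.1 + p.2) from measurable_fst.add measurable_snd)), ← lintegral_indicator hs]
    have hstep1 : ∀ p : ℝ × ℝ,
        ((fun p : ℝ × ℝ => p.1 + p.2) ⁻¹' s).indicator
          (fun p => ENNReal.ofReal (f p.1) * ENNReal.ofReal (g p.2)) p
        = s.indicator (fun _ => (1 : ℝ≥0∞)) (p.1 + p.2)
            * ENNReal.ofReal (f p.1) * ENNReal.ofReal (g p.2) := by
      intro p
      by_cases hp : p.1 + p.2 ∈ s <;>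
        simp [Set.indicator, hp, Set.mem_preimage]
    calc (∫⁻ p, ((fun p : ℝ × ℝ => p.1 + p.2) ⁻¹' s).indicator
            (fun p => ENNReal.ofReal (f p.1) * ENNReal.ofReal (g p.2)) p
          ∂(volume : Measure ℝ).prod volume)
        = ∫⁻ p, s.indicator (fun _ => (1 : ℝ≥0∞)) (p.1 + p.2)
            * ENNReal.ofReal (f p.1) * ENNReal.ofReal (g p.2)
          ∂(volume : Measure ℝ).prod volume := by
          congr 1; funext p; exact hstep1 p
      _ = ∫⁻ y, ∫⁻ x, s.indicator (fun _ => (1 : ℝ≥0∞)) (x + y)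
            * ENNReal.ofReal (f x) * ENNReal.ofReal (g y) ∂volume ∂volume := by
          apply lintegral_prod_symm'
          exact (((measurable_const.indicator hs).comp
            (measurable_fst.add measurable_snd)).mul
            (ENNReal.measurable_ofReal.comp (hfmeas.comp measurable_fst))).mul
            (ENNReal.measurable_ofReal.comp (hgmeas.comp measurable_snd))
      _ = ∫⁻ y, ∫⁻ x, s.indicator (fun _ => (1 : ℝ≥0∞)) x
            * ENNReal.ofReal (f (x - y)) * ENNReal.ofReal (g y) ∂volume ∂volume := by
          congr 1; funext y
          have hmp : MeasurePreserving (fun x : ℝ => x + y) volume volume :=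
            measurePreserving_add_right volume y
          have hintm : Measurable fun x => s.indicator (fun _ => (1 : ℝ≥0∞)) x
              * ENNReal.ofReal (f (x - y)) * ENNReal.ofReal (g y) :=
            (((measurable_const.indicator hs)).mul
              (ENNReal.measurable_ofReal.comp (hfmeas.comp (measurable_id.sub
                measurable_const)))).mul measurable_const
          rw [← hmp.lintegral_comp hintm]
          congr 1; funext x
          simp only [add_sub_cancel_right]
      _ = ∫⁻ x, ∫⁻ y, s.indicator (fun _ => (1 : ℝ≥0∞)) x
            * ENNReal.ofReal (f (x - y)) * ENNReal.ofReal (g y) ∂volume ∂volume := by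
          apply (lintegral_lintegral_swap ?_).symm
          exact ((((measurable_const.indicator hs).comp measurable_fst).mul
            (ENNReal.measurable_ofReal.comp (hfmeas.comp
              (measurable_fst.sub measurable_snd)))).mul
            (ENNReal.measurable_ofReal.comp (hgmeas.comp measurable_snd))).aemeasurable
      _ = ∫⁻ x, s.indicator H x ∂volume := by
          congr 1; funext x
          rw [show (fun y => s.indicator (fun _ => (1 : ℝ≥0∞)) x
              * ENNReal.ofReal (f (x - y)) * ENNReal.ofReal (g y))
            = fun y => s.indicator (fun _ => (1 : ℝ≥0∞)) x
              * (ENNReal.ofReal (f (x - y)) * ENNReal.ofReal (g y)) by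
                funext y; ring_nf]
          have hm2 : Measurable fun y : ℝ =>
              ENNReal.ofReal (f (x - y)) * ENNReal.ofReal (g y) :=
            (hfmeas.comp (measurable_const.sub measurable_id)).ennreal_ofReal.mul
              hgmeas.ennreal_ofReal
          rw [lintegral_const_mul _ hm2]
          by_cases hx : x ∈ s
          · simp only [Set.indicator_of_mem hx, one_mul, hH]
            congr 1; funext y; rw [ENNReal.ofReal_mul (hf0 _)]
          · simp [Set.indicator_of_notMem hx]
  -- conclude
  refine ⟨fun x => (H x).toReal, hHmeas.ennreal_toReal, fun x => ENNReal.toReal_nonneg, ?_, ?_, ?_⟩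
  · rw [hlaw]
    congr 1
    funext x
    rw [ENNReal.ofReal_toReal (hHfin x)]
  · intro x; exact congrArg ENNReal.toReal (hHeven x)
  · intro a ha b hb hab
    exact ENNReal.toReal_le_toReal (hHfin b) (hHfin a) |>.mpr (hHanti ha hb hab)
end

section
/- Let $\Phi : \mathbb{R} \to \mathbb{R}$ be an even function of class $C^3$ with $\Phi'''(x) \geq 0$ for all $x \geq 0$. Then for every $a, b > 0$, the function $h(x) = \int_{-b}^{b}\int_{-a}^{a} \Phi(u + \sqrt{x}\, v)\, du\, dv$ is convex on $[0,\infty)$. -/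
open Real Set intervalIntegral

/-- Monotone-derivative MVT helper: if `P' = Q` with `P 0 = 0` and `Q` monotone on `[0,∞)`,
then `u * P t ≤ t * P u` for `0 < t ≤ u`. -/
lemma aux_key {P Q : ℝ → ℝ} (hP : ∀ s, HasDerivAt P (Q s) s) (hP0 : P 0 = 0)
    (hQ : MonotoneOn Q (Set.Ici 0)) {t u : ℝ} (ht : 0 < t) (htu : t ≤ u) :
    u * P t ≤ t * P u := by
  -- P t ≤ t * Q t
  have h1 : P t ≤ t * Q t := by
    have hm : MonotoneOn (fun s => s * Q t - P s) (Set.Icc 0 t) := by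
      apply monotoneOn_of_deriv_nonneg (convex_Icc 0 t)
      · have hPd : Differentiable ℝ P := fun s => (hP s).differentiableAt
        exact ((continuous_id.mul continuous_const).sub hPd.continuous).continuousOn
      · intro s _
        exact (((differentiable_id.mul (differentiable_const _)) s).sub
          (hP s).differentiableAt).differentiableWithinAt
      · intro s hs
        rw [interior_Icc] at hs
        have hd : HasDerivAt (fun s => s * Q t - P s) (Q t - Q s) s := by
          simpa using ((hasDerivAt_id s).mul_const (Q t)).fun_sub (hP s)
        rw [hd.deriv]
        have := hQ (le_of_lt hs.1 : (0:ℝ) ≤ s) ht.le hs.2.le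
        linarith
    have := hm (Set.left_mem_Icc.2 ht.le) (Set.right_mem_Icc.2 ht.le) ht.le
    simp only [hP0, zero_mul, sub_zero] at this
    linarith
  -- (u - t) * Q t ≤ P u - P t
  have h2 : (u - t) * Q t ≤ P u - P t := by
    have hm : MonotoneOn (fun s => P s - s * Q t) (Set.Icc t u) := by
      apply monotoneOn_of_deriv_nonneg (convex_Icc t u)
      · have hPd : Differentiable ℝ P := fun s => (hP s).differentiableAt
        exact (hPd.continuous.sub (continuous_id.mul continuous_const)).continuousOn
      · intro s _
        exact ((hP s).differentiableAt.sub
          ((differentiable_id.mul (differentiable_const _)) s)).differentiableWithinAt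
      · intro s hs
        rw [interior_Icc] at hs
        have hd : HasDerivAt (fun s => P s - s * Q t) (Q s - Q t) s := by
          simpa using (hP s).fun_sub ((hasDerivAt_id s).mul_const (Q t))
        rw [hd.deriv]
        have := hQ ht.le (ht.trans hs.1).le hs.1.le
        linarith
    have := hm (Set.left_mem_Icc.2 htu) (Set.right_mem_Icc.2 htu) htu
    simp only at this
    linarith
  nlinarith [mul_le_mul_of_nonneg_left h1 (sub_nonneg.2 htu),
    mul_le_mul_of_nonneg_left h2 ht.le]

/-- If `Φ` is an even `C³` function with `Φ''' ≥ 0` on `[0,∞)`, then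
`h(x) = ∫_{-b}^b ∫_{-a}^a Φ(u + √x v) du dv` is convex on `[0,∞)`. -/
theorem stmt_10 (Φ : ℝ → ℝ) (hΦ : ContDiff ℝ 3 Φ) (heven : ∀ x, Φ (-x) = Φ x)
    (hΦ''' : ∀ x : ℝ, 0 ≤ x → 0 ≤ deriv^[3] Φ x)
    (a b : ℝ) (ha : 0 < a) (hb : 0 < b)
    (h : ℝ → ℝ)
    (hh : ∀ x : ℝ, 0 ≤ x →
      h x = ∫ v in (-b)..b, ∫ u in (-a)..a, Φ (u + Real.sqrt x * v)) :
    ConvexOn ℝ (Set.Ici 0) h := by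
  -- basic regularity
  have c0 : Continuous Φ := hΦ.continuous
  have hΦ3 : ContDiff ℝ ((0:ℕ) + (3:ℕ) : ℕ) Φ := by exact_mod_cast hΦ
  have hΦ21 : ContDiff ℝ ((2:ℕ) + (1:ℕ) : ℕ) Φ := by exact_mod_cast hΦ
  have hΦ12 : ContDiff ℝ ((1:ℕ) + (2:ℕ) : ℕ) Φ := by exact_mod_cast hΦ
  have hD1 : ContDiff ℝ (2:ℕ) (deriv Φ) := by
    have := hΦ21.iterate_deriv' 2 1
    simpa using this
  have hD2 : ContDiff ℝ (1:ℕ) (deriv (deriv Φ)) := by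
    have := hΦ12.iterate_deriv' 1 2
    simpa [Function.iterate_succ_apply'] using this
  have hD3 : Continuous (deriv (deriv (deriv Φ))) := by
    have := (hΦ3.iterate_deriv' 0 3).continuous
    simpa [Function.iterate_succ_apply'] using this
  have d0 : Differentiable ℝ Φ := hΦ.differentiable (by norm_num)
  have d1 : Differentiable ℝ (deriv Φ) := hD1.differentiable (by norm_num)
  have d2 : Differentiable ℝ (deriv (deriv Φ)) := hD2.differentiable (by norm_num)
  have c1 : Continuous (deriv Φ) := d1.continuous
  have c2 : Continuous (deriv (deriv Φ)) := d2.continuous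
  have hiter : deriv^[3] Φ = deriv (deriv (deriv Φ)) := by
    simp [Function.iterate_succ_apply']
  -- deriv Φ is odd, deriv² Φ is even
  have hodd1 : ∀ x, deriv Φ (-x) = -deriv Φ x := by
    intro x
    have : deriv (fun y => Φ (-y)) x = deriv Φ x := by
      congr 1; ext y; exact heven y
    rw [deriv_comp_neg] at this
    linarith
  have heven2 : ∀ x, deriv (deriv Φ) (-x) = deriv (deriv Φ) x := by
    intro x
    have : deriv (fun y => deriv Φ (-y)) x = deriv (fun y => -deriv Φ y) x := by
      congr 1; ext y; exact hodd1 y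
    rw [deriv_comp_neg, deriv.fun_neg] at this
    linarith
  -- deriv² Φ is monotone on [0,∞)
  have hmono2 : MonotoneOn (deriv (deriv Φ)) (Set.Ici 0) := by
    apply monotoneOn_of_deriv_nonneg (convex_Ici 0) c2.continuousOn
      (d2.differentiableOn)
    intro x hx
    rw [interior_Ici] at hx
    have := hΦ''' x (le_of_lt hx)
    rwa [hiter] at this
  -- key comparison for deriv² Φ
  have hcmp : ∀ s : ℝ, 0 ≤ s → deriv (deriv Φ) (s - a) ≤ deriv (deriv Φ) (s + a) := by
    intro s hs
    rcases le_total a s with hle | hle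
    · exact hmono2 (by simp; linarith) (by simp; linarith) (by linarith)
    · have : deriv (deriv Φ) (s - a) = deriv (deriv Φ) (a - s) := by
        rw [← heven2 (a - s)]; ring_nf
      rw [this]
      exact hmono2 (by simp; linarith) (by simp; linarith) (by linarith)
  -- the functions P, Q, F, G
  set P : ℝ → ℝ := fun s => Φ (s + a) - Φ (s - a) with hPdef
  set Q : ℝ → ℝ := fun s => deriv Φ (s + a) - deriv Φ (s - a) with hQdef
  set F : ℝ → ℝ := fun x => ∫ w in (0:ℝ)..x, Φ w with hFdef
  set G : ℝ → ℝ := fun s => F (s + a) - F (s - a) with hGdef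
  have hF : ∀ x, HasDerivAt F (Φ x) x := fun x => (c0.integral_hasStrictDerivAt 0 x).hasDerivAt
  have hGderiv : ∀ s, HasDerivAt G (P s) s := by
    intro s
    have h1 : HasDerivAt (fun s => F (s + a)) (Φ (s + a)) s := by
      simpa [Function.comp_def] using (hF (s + a)).comp s ((hasDerivAt_id s).add_const a)
    have h2 : HasDerivAt (fun s => F (s - a)) (Φ (s - a)) s := by
      simpa [Function.comp_def] using (hF (s - a)).comp s ((hasDerivAt_id s).sub_const a)
    simpa using h1.fun_sub h2
  have hPderiv : ∀ s, HasDerivAt P (Q s) s := by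
    intro s
    have h1 : HasDerivAt (fun s => Φ (s + a)) (deriv Φ (s + a)) s := by
      simpa [Function.comp_def] using ((d0 (s + a)).hasDerivAt).comp s ((hasDerivAt_id s).add_const a)
    have h2 : HasDerivAt (fun s => Φ (s - a)) (deriv Φ (s - a)) s := by
      simpa [Function.comp_def] using ((d0 (s - a)).hasDerivAt).comp s ((hasDerivAt_id s).sub_const a)
    simpa using h1.fun_sub h2
  have hGcont : Continuous G := by
    have : Differentiable ℝ G := fun s => (hGderiv s).differentiableAt
    exact this.continuous
  have hP0 : P 0 = 0 := by
    simp only [hPdef, zero_add, zero_sub]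
    rw [← heven a]; ring_nf
  -- Q is monotone on [0,∞)
  have hQmono : MonotoneOn Q (Set.Ici 0) := by
    apply monotoneOn_of_deriv_nonneg (convex_Ici 0)
    · exact ((c1.comp (continuous_id.add continuous_const)).sub
        (c1.comp (continuous_id.sub continuous_const))).continuousOn
    · intro s _
      have h1 : HasDerivAt (fun s => deriv Φ (s + a)) (deriv (deriv Φ) (s + a)) s := by
        simpa [Function.comp_def] using ((d1 (s + a)).hasDerivAt).comp s ((hasDerivAt_id s).add_const a)
      have h2 : HasDerivAt (fun s => deriv Φ (s - a)) (deriv (deriv Φ) (s - a)) s := by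
        simpa [Function.comp_def] using ((d1 (s - a)).hasDerivAt).comp s ((hasDerivAt_id s).sub_const a)
      exact ((h1.sub h2).differentiableAt).differentiableWithinAt
    · intro s hs
      rw [interior_Ici] at hs
      have h1 : HasDerivAt (fun s => deriv Φ (s + a)) (deriv (deriv Φ) (s + a)) s := by
        simpa [Function.comp_def] using ((d1 (s + a)).hasDerivAt).comp s ((hasDerivAt_id s).add_const a)
      have h2 : HasDerivAt (fun s => deriv Φ (s - a)) (deriv (deriv Φ) (s - a)) s := by
        simpa [Function.comp_def] using ((d1 (s - a)).hasDerivAt).comp s ((hasDerivAt_id s).sub_const a)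
      rw [(h1.fun_sub h2).deriv]
      have := hcmp s (le_of_lt hs)
      linarith
  -- F is odd, G is even
  have hFodd : ∀ x, F (-x) = -F x := by
    intro x
    have h1 : (∫ w in (0:ℝ)..x, Φ (-w)) = ∫ w in (-x)..(-(0:ℝ)), Φ w :=
      intervalIntegral.integral_comp_neg Φ
    have h2 : (∫ w in (0:ℝ)..x, Φ (-w)) = ∫ w in (0:ℝ)..x, Φ w := by
      simp only [heven]
    simp only [neg_zero] at h1
    rw [h2] at h1
    simp only [hFdef]
    rw [intervalIntegral.integral_symm, ← h1]
  have hGeven : ∀ s, G (-s) = G s := by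
    intro s
    simp only [hGdef]
    have e1 : -s + a = -(s - a) := by ring
    have e2 : -s - a = -(s + a) := by ring
    rw [e1, e2, hFodd, hFodd]
    ring
  -- inner integral equals G
  have hInner : ∀ c : ℝ, (∫ u in (-a)..a, Φ (u + c)) = G c := by
    intro c
    rw [intervalIntegral.integral_comp_add_right]
    have key : (∫ w in (-a + c)..(a + c), Φ w)
        = (∫ w in (0:ℝ)..(a + c), Φ w) - ∫ w in (0:ℝ)..(-a + c), Φ w := by
      rw [eq_sub_iff_add_eq]
      rw [add_comm]
      exact intervalIntegral.integral_add_adjacent_intervals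
        (c0.intervalIntegrable _ _) (c0.intervalIntegrable _ _)
    rw [key]
    simp only [hGdef, hFdef]
    congr 2
    · ring
    · ring
  -- convexity of x ↦ G (√x * c) on [0,∞)
  have hconv : ∀ c : ℝ, ConvexOn ℝ (Set.Ici 0) (fun x => G (Real.sqrt x * c)) := by
    have main : ∀ c : ℝ, 0 < c → ConvexOn ℝ (Set.Ici 0) (fun x => G (Real.sqrt x * c)) := by
      intro c hc
      apply MonotoneOn.convexOn_of_deriv (convex_Ici 0)
      · exact (hGcont.comp (Real.continuous_sqrt.mul continuous_const)).continuousOn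
      · rw [interior_Ici]
        intro x hx
        have hx0 : (0:ℝ) < x := hx
        have hs : HasDerivAt (fun x => Real.sqrt x * c) (1 / (2 * Real.sqrt x) * c) x :=
          (Real.hasDerivAt_sqrt hx0.ne').mul_const c
        exact (((hGderiv _).comp x hs).differentiableAt).differentiableWithinAt
      · rw [interior_Ici]
        intro x hx y hy hxy
        have hx0 : (0:ℝ) < x := hx
        have hy0 : (0:ℝ) < y := hy
        have hdx : HasDerivAt (fun x => G (Real.sqrt x * c))
            (P (Real.sqrt x * c) * (1 / (2 * Real.sqrt x) * c)) x :=
          (hGderiv _).comp x ((Real.hasDerivAt_sqrt hx0.ne').mul_const c)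
        have hdy : HasDerivAt (fun x => G (Real.sqrt x * c))
            (P (Real.sqrt y * c) * (1 / (2 * Real.sqrt y) * c)) y :=
          (hGderiv _).comp y ((Real.hasDerivAt_sqrt hy0.ne').mul_const c)
        rw [hdx.deriv, hdy.deriv]
        have hsx : 0 < Real.sqrt x := Real.sqrt_pos.2 hx0
        have hsy : 0 < Real.sqrt y := Real.sqrt_pos.2 hy0
        have hsxy : Real.sqrt x ≤ Real.sqrt y := Real.sqrt_le_sqrt hxy
        have ht : 0 < Real.sqrt x * c := mul_pos hsx hc
        have htu : Real.sqrt x * c ≤ Real.sqrt y * c :=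
          mul_le_mul_of_nonneg_right hsxy hc.le
        have key := aux_key hPderiv hP0 hQmono ht htu
        have l1 : P (Real.sqrt x * c) * (1 / (2 * Real.sqrt x) * c)
            = (P (Real.sqrt x * c) * c) / (2 * Real.sqrt x) := by ring
        have l2 : P (Real.sqrt y * c) * (1 / (2 * Real.sqrt y) * c)
            = (P (Real.sqrt y * c) * c) / (2 * Real.sqrt y) := by ring
        rw [l1, l2, div_le_div_iff₀ (by positivity) (by positivity)]
        nlinarith [key, hsx, hsy, hc]
    intro c
    rcases lt_trichotomy c 0 with hc | hc | hc
    · have : (fun x => G (Real.sqrt x * c)) = fun x => G (Real.sqrt x * (-c)) := by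
        ext x
        rw [← hGeven (Real.sqrt x * (-c))]
        ring_nf
      rw [this]
      exact main (-c) (by linarith)
    · subst hc
      simp only [mul_zero]
      exact convexOn_const _ (convex_Ici 0)
    · exact main c hc
  -- assemble: h is an integral of convex functions
  constructor
  · exact convex_Ici 0
  intro x hx y hy α β hα hβ hαβ
  have hx0 : (0:ℝ) ≤ x := hx
  have hy0 : (0:ℝ) ≤ y := hy
  have hz0 : (0:ℝ) ≤ α • x + β • y := by positivity
  have hrw : ∀ z : ℝ, 0 ≤ z → h z = ∫ v in (-b)..b, G (Real.sqrt z * v) := by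
    intro z hz
    rw [hh z hz]
    apply intervalIntegral.integral_congr
    intro v _
    exact hInner (Real.sqrt z * v)
  rw [hrw _ hz0, hrw _ hx0, hrw _ hy0]
  have hint : ∀ z : ℝ, IntervalIntegrable (fun v => G (Real.sqrt z * v)) MeasureTheory.volume (-b) b := by
    intro z
    exact (hGcont.comp (continuous_const.mul continuous_id)).intervalIntegrable _ _
  have hle : ∀ v ∈ Set.Icc (-b) b,
      G (Real.sqrt (α • x + β • y) * v) ≤ α * G (Real.sqrt x * v) + β * G (Real.sqrt y * v) := by
    intro v _
    have := (hconv v).2 hx hy hα hβ hαβ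
    simpa [smul_eq_mul] using this
  calc (∫ v in (-b)..b, G (Real.sqrt (α • x + β • y) * v))
      ≤ ∫ v in (-b)..b, (α * G (Real.sqrt x * v) + β * G (Real.sqrt y * v)) := by
        apply intervalIntegral.integral_mono_on (by linarith) (hint _)
        · exact ((hint x).const_mul α).add ((hint y).const_mul β)
        · exact hle
    _ = α • (∫ v in (-b)..b, G (Real.sqrt x * v)) + β • ∫ v in (-b)..b, G (Real.sqrt y * v) := by
        rw [intervalIntegral.integral_add ((hint x).const_mul α) ((hint y).const_mul β),
          intervalIntegral.integral_const_mul, intervalIntegral.integral_const_mul]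
        simp [smul_eq_mul]
end

section
/- Let $\Phi : \mathbb{R} \to \mathbb{R}$ be an even $C^3$ function such that for every $a, b > 0$ the function $h_{a,b}(x) = \int_{-b}^{b}\int_{-a}^{a} \Phi(u + \sqrt{x}\, v)\, du\, dv$ is convex on $[0,\infty)$. Then $\Phi'''(x) \geq 0$ for every $x \geq 0$. -/
open Real Set intervalIntegral

namespace Stmt11Aux

/-- If `f` is monotone on `(0,∞)` and has derivative `c` at `x > 0`, then `0 ≤ c`. -/
lemma deriv_nonneg_of_monotoneOn {f : ℝ → ℝ} {c x : ℝ} (hf : MonotoneOn f (Set.Ioi 0))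
    (hx : 0 < x) (h : HasDerivAt f c x) : 0 ≤ c := by
  have T : Filter.Tendsto (slope f x) (nhdsWithin x (Set.Ioi x)) (nhds c) :=
    (hasDerivAt_iff_tendsto_slope.1 h).mono_left
      (nhdsWithin_mono x (fun y hy => ne_of_gt hy))
  refine ge_of_tendsto T ?_
  filter_upwards [self_mem_nhdsWithin] with y hy
  have hxy : x < y := hy
  have h0 : f x ≤ f y := hf (Set.mem_Ioi.2 hx) (Set.mem_Ioi.2 (hx.trans hxy)) hxy.le
  rw [slope_def_field]
  exact div_nonneg (by linarith) (by linarith)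

/-- If `f 0 = 0` and `f' < 0` on `(0,δ)` then `f < 0` on `(0,δ)`. -/
lemma neg_of_deriv_neg {f g : ℝ → ℝ} {δ : ℝ} (hf : ∀ t, HasDerivAt f (g t) t)
    (h0 : f 0 = 0) (hg : ∀ t ∈ Set.Ioo (0:ℝ) δ, g t < 0) :
    ∀ t ∈ Set.Ioo (0:ℝ) δ, f t < 0 := by
  intro t ht
  have hanti : StrictAntiOn f (Set.Icc 0 t) := by
    refine strictAntiOn_of_deriv_neg (convex_Icc 0 t)
      (fun y _ => (hf y).differentiableAt.continuousAt.continuousWithinAt) ?_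
    intro y hy
    rw [interior_Icc] at hy
    rw [(hf y).deriv]
    exact hg y ⟨hy.1, hy.2.trans ht.2⟩
  have := hanti (Set.left_mem_Icc.2 ht.1.le) (Set.right_mem_Icc.2 ht.1.le) ht.1
  rwa [h0] at this

/-- The key local analysis: if the "Q" quantity is nonnegative for all small positive `t`,
then the third derivative at `a` is nonnegative. -/
lemma third_deriv_nonneg (Φ F G Φ' Φ'' Φ''' : ℝ → ℝ)
    (hF : ∀ x, HasDerivAt F (Φ x) x) (hG : ∀ x, HasDerivAt G (F x) x)
    (hd1 : ∀ x, HasDerivAt Φ (Φ' x) x) (hd2 : ∀ x, HasDerivAt Φ' (Φ'' x) x)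
    (hd3 : ∀ x, HasDerivAt Φ'' (Φ''' x) x) (hc3 : Continuous Φ''') (a : ℝ)
    (hQ : ∀ t, 0 < t →
      0 ≤ 2*t^2*(Φ (a+t) - Φ (a-t)) - 6*t*(F (a+t) + F (a-t)) + 6*(G (a+t) - G (a-t))) :
    0 ≤ Φ''' a := by
  by_contra hneg
  push_neg at hneg
  -- find δ with Φ''' < 0 on the ball of radius δ around a
  obtain ⟨δ, hδ, hball⟩ : ∃ δ > 0, ∀ y, |y - a| < δ → Φ''' y < 0 := by
    have : ∀ᶠ y in nhds a, Φ''' y < 0 :=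
      (hc3.continuousAt).eventually_lt continuousAt_const hneg
    rcases Metric.eventually_nhds_iff.1 this with ⟨δ, hδ, h⟩
    exact ⟨δ, hδ, fun y hy => h (by simpa [Real.dist_eq] using hy)⟩
  -- Q and its derivatives
  set Q : ℝ → ℝ := fun t => 2*t^2*(Φ (a+t) - Φ (a-t)) - 6*t*(F (a+t) + F (a-t))
    + 6*(G (a+t) - G (a-t)) with hQdef
  set Q1 : ℝ → ℝ := fun t => -2*t*(Φ (a+t) - Φ (a-t)) + 2*t^2*(Φ' (a+t) + Φ' (a-t)) with hQ1def
  set Q2 : ℝ → ℝ := fun t => -2*(Φ (a+t) - Φ (a-t)) + 2*t*(Φ' (a+t) + Φ' (a-t))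
    + 2*t^2*(Φ'' (a+t) - Φ'' (a-t)) with hQ2def
  set Q3 : ℝ → ℝ := fun t => 6*t*(Φ'' (a+t) - Φ'' (a-t)) + 2*t^2*(Φ''' (a+t) + Φ''' (a-t))
    with hQ3def
  have hup : ∀ t : ℝ, HasDerivAt (fun t : ℝ => a + t) 1 t := fun t => by
    simpa using (hasDerivAt_id t).const_add a
  have hdown : ∀ t : ℝ, HasDerivAt (fun t : ℝ => a - t) (-1) t := fun t => by
    simpa using (hasDerivAt_id t).const_sub a
  have comp_up : ∀ (f f' : ℝ → ℝ), (∀ x, HasDerivAt f (f' x) x) → ∀ t : ℝ,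
      HasDerivAt (fun t => f (a + t)) (f' (a + t)) t := by
    intro f f' hf t
    simpa [Function.comp_def] using (hf (a + t)).comp t (hup t)
  have comp_down : ∀ (f f' : ℝ → ℝ), (∀ x, HasDerivAt f (f' x) x) → ∀ t : ℝ,
      HasDerivAt (fun t => f (a - t)) (-(f' (a - t))) t := by
    intro f f' hf t
    simpa [Function.comp_def] using (hf (a - t)).comp t (hdown t)
  have hDQ : ∀ t, HasDerivAt Q (Q1 t) t := by
    intro t
    have h1 : HasDerivAt (fun t : ℝ => 2*t^2*(Φ (a+t) - Φ (a-t)))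
        (2*(2*t)*(Φ (a+t) - Φ (a-t)) + 2*t^2*(Φ' (a+t) - -(Φ' (a-t)))) t := by
      have ha1 : HasDerivAt (fun t : ℝ => 2*t^2) (2*(2*t)) t := by
        simpa using ((hasDerivAt_pow 2 t).const_mul 2)
      exact ha1.mul ((comp_up Φ Φ' hd1 t).sub (comp_down Φ Φ' hd1 t))
    have h2 : HasDerivAt (fun t : ℝ => 6*t*(F (a+t) + F (a-t)))
        (6*(F (a+t) + F (a-t)) + 6*t*(Φ (a+t) + -(Φ (a-t)))) t := by
      have ha2 : HasDerivAt (fun t : ℝ => 6*t) 6 t := by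
        simpa using (hasDerivAt_id t).const_mul (6:ℝ)
      have := ha2.mul ((comp_up F Φ hF t).add (comp_down F Φ hF t))
      exact this.congr_deriv (by simp only [Pi.add_apply, Pi.sub_apply])
    have h3 : HasDerivAt (fun t : ℝ => 6*(G (a+t) - G (a-t)))
        (6*(F (a+t) - -(F (a-t)))) t :=
      ((comp_up G F hG t).sub (comp_down G F hG t)).const_mul 6
    have := (h1.sub h2).add h3
    refine this.congr_deriv ?_
    simp only [hQ1def]; ring
  have hDQ1 : ∀ t, HasDerivAt Q1 (Q2 t) t := by
    intro t
    have h1 : HasDerivAt (fun t : ℝ => -2*t*(Φ (a+t) - Φ (a-t)))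
        (-2*(Φ (a+t) - Φ (a-t)) + -2*t*(Φ' (a+t) - -(Φ' (a-t)))) t := by
      have ha1 : HasDerivAt (fun t : ℝ => -2*t) (-2) t := by
        simpa using (hasDerivAt_id t).const_mul (-2:ℝ)
      have := ha1.mul ((comp_up Φ Φ' hd1 t).sub (comp_down Φ Φ' hd1 t))
      exact this.congr_deriv (by simp only [Pi.add_apply, Pi.sub_apply])
    have h2 : HasDerivAt (fun t : ℝ => 2*t^2*(Φ' (a+t) + Φ' (a-t)))
        (2*(2*t)*(Φ' (a+t) + Φ' (a-t)) + 2*t^2*(Φ'' (a+t) + -(Φ'' (a-t)))) t := by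
      have ha1 : HasDerivAt (fun t : ℝ => 2*t^2) (2*(2*t)) t := by
        simpa using ((hasDerivAt_pow 2 t).const_mul 2)
      exact ha1.mul ((comp_up Φ' Φ'' hd2 t).add (comp_down Φ' Φ'' hd2 t))
    have := h1.add h2
    refine this.congr_deriv ?_
    simp only [hQ2def]; ring
  have hDQ2 : ∀ t, HasDerivAt Q2 (Q3 t) t := by
    intro t
    have h1 : HasDerivAt (fun t : ℝ => -2*(Φ (a+t) - Φ (a-t)))
        (-2*(Φ' (a+t) - -(Φ' (a-t)))) t :=
      ((comp_up Φ Φ' hd1 t).sub (comp_down Φ Φ' hd1 t)).const_mul (-2)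
    have h2 : HasDerivAt (fun t : ℝ => 2*t*(Φ' (a+t) + Φ' (a-t)))
        (2*(Φ' (a+t) + Φ' (a-t)) + 2*t*(Φ'' (a+t) + -(Φ'' (a-t)))) t := by
      have ha1 : HasDerivAt (fun t : ℝ => 2*t) 2 t := by
        simpa using (hasDerivAt_id t).const_mul (2:ℝ)
      have := ha1.mul ((comp_up Φ' Φ'' hd2 t).add (comp_down Φ' Φ'' hd2 t))
      exact this.congr_deriv (by simp only [Pi.add_apply, Pi.sub_apply])
    have h3 : HasDerivAt (fun t : ℝ => 2*t^2*(Φ'' (a+t) - Φ'' (a-t)))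
        (2*(2*t)*(Φ'' (a+t) - Φ'' (a-t)) + 2*t^2*(Φ''' (a+t) - -(Φ''' (a-t)))) t := by
      have ha1 : HasDerivAt (fun t : ℝ => 2*t^2) (2*(2*t)) t := by
        simpa using ((hasDerivAt_pow 2 t).const_mul 2)
      exact ha1.mul ((comp_up Φ'' Φ''' hd3 t).sub (comp_down Φ'' Φ''' hd3 t))
    have := (h1.add h2).add h3
    refine this.congr_deriv ?_
    simp only [hQ3def]; ring
  -- Q3 < 0 on (0, δ)
  have hQ3neg : ∀ t ∈ Set.Ioo (0:ℝ) δ, Q3 t < 0 := by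
    intro t ht
    have h1 : Φ'' (a+t) - Φ'' (a-t) < 0 := by
      have hanti : StrictAntiOn Φ'' (Set.Icc (a-t) (a+t)) := by
        refine strictAntiOn_of_deriv_neg (convex_Icc _ _)
          (fun y _ => (hd3 y).differentiableAt.continuousAt.continuousWithinAt) ?_
        intro y hy
        rw [interior_Icc, Set.mem_Ioo] at hy
        rw [(hd3 y).deriv]
        exact hball y (by rw [abs_lt]; constructor <;> [linarith [ht.2]; linarith [ht.2]])
      have := hanti (Set.mem_Icc.2 ⟨le_refl _, by linarith [ht.1]⟩)
        (Set.mem_Icc.2 ⟨by linarith [ht.1], le_refl _⟩) (by linarith [ht.1])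
      linarith
    have h2 : Φ''' (a+t) < 0 := hball _ (by rw [abs_lt]; exact ⟨by linarith [ht.1, ht.2], by linarith [ht.2]⟩)
    have h3 : Φ''' (a-t) < 0 := hball _ (by rw [abs_lt]; exact ⟨by linarith [ht.2], by linarith [ht.1]⟩)
    have ht1 : 0 < t := ht.1
    simp only [hQ3def]
    nlinarith
  -- propagate downwards
  have hQ2neg : ∀ t ∈ Set.Ioo (0:ℝ) δ, Q2 t < 0 :=
    neg_of_deriv_neg hDQ2 (by simp only [hQ2def]; ring) hQ3neg
  have hQ1neg : ∀ t ∈ Set.Ioo (0:ℝ) δ, Q1 t < 0 :=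
    neg_of_deriv_neg hDQ1 (by simp only [hQ1def]; ring) hQ2neg
  have hQneg : ∀ t ∈ Set.Ioo (0:ℝ) δ, Q t < 0 :=
    neg_of_deriv_neg hDQ (by simp only [hQdef]; ring) hQ1neg
  have hmem : (δ/2) ∈ Set.Ioo (0:ℝ) δ := ⟨by linarith, by linarith⟩
  exact absurd (hQ (δ/2) hmem.1) (not_le.2 (hQneg (δ/2) hmem))

end Stmt11Aux

/-- If `Φ` is an even `C³` function such that `h_{a,b}(x) = ∫_{-b}^b ∫_{-a}^a Φ(u + √x v) du dv`
is convex on `[0,∞)` for all `a, b > 0`, then `Φ''' ≥ 0` on `[0,∞)`. -/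
theorem stmt_11 (Φ : ℝ → ℝ) (hΦ : ContDiff ℝ 3 Φ) (heven : ∀ x, Φ (-x) = Φ x)
    (hconv : ∀ a b : ℝ, 0 < a → 0 < b →
      ConvexOn ℝ (Set.Ici 0)
        (fun x => ∫ v in (-b)..b, ∫ u in (-a)..a, Φ (u + Real.sqrt x * v))) :
    ∀ x : ℝ, 0 ≤ x → 0 ≤ deriv^[3] Φ x := by
  classical
  -- basic smoothness facts
  have hc : Continuous Φ := hΦ.continuous
  have hd1 : ∀ x, HasDerivAt Φ (deriv Φ x) x := fun x =>
    ((hΦ.differentiable (by norm_num)) x).hasDerivAt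
  have hdiff1 : Differentiable ℝ (deriv Φ) := by
    have := hΦ.differentiable_iteratedDeriv 1 (by norm_num)
    rwa [iteratedDeriv_eq_iterate] at this
  have hd2 : ∀ x, HasDerivAt (deriv Φ) (deriv (deriv Φ) x) x := fun x => (hdiff1 x).hasDerivAt
  have hdiff2 : Differentiable ℝ (deriv (deriv Φ)) := by
    have := hΦ.differentiable_iteratedDeriv 2 (by norm_num)
    rwa [iteratedDeriv_eq_iterate] at this
  have hd3 : ∀ x, HasDerivAt (deriv (deriv Φ)) (deriv^[3] Φ x) x := fun x => (hdiff2 x).hasDerivAt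
  have hc3 : Continuous (deriv^[3] Φ) := by
    have := hΦ.continuous_iteratedDeriv 3 le_rfl
    rwa [iteratedDeriv_eq_iterate] at this
  -- antiderivatives F (of Φ) and G (of F)
  obtain ⟨F, hF0, hF⟩ : ∃ F : ℝ → ℝ, F 0 = 0 ∧ ∀ x, HasDerivAt F (Φ x) x :=
    ⟨fun x => ∫ t in (0:ℝ)..x, Φ t, by simp, fun x =>
      intervalIntegral.integral_hasDerivAt_right (hc.intervalIntegrable _ _)
        (hc.stronglyMeasurableAtFilter _ _) hc.continuousAt⟩
  have hFdiff : Differentiable ℝ F := fun x => (hF x).differentiableAt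
  have hFc : Continuous F := hFdiff.continuous
  obtain ⟨G, hG⟩ : ∃ G : ℝ → ℝ, ∀ x, HasDerivAt G (F x) x :=
    ⟨fun x => ∫ t in (0:ℝ)..x, F t, fun x =>
      intervalIntegral.integral_hasDerivAt_right (hFc.intervalIntegrable _ _)
        (hFc.stronglyMeasurableAtFilter _ _) hFc.continuousAt⟩
  have hGdiff : Differentiable ℝ G := fun x => (hG x).differentiableAt
  have hGc : Continuous G := hGdiff.continuous
  -- FTC evaluation
  have hFTCPhi : ∀ p q : ℝ, (∫ t in p..q, Φ t) = F q - F p := fun p q =>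
    intervalIntegral.integral_eq_sub_of_hasDerivAt (fun t _ => hF t) (hc.intervalIntegrable p q)
  have hFTCF : ∀ p q : ℝ, (∫ t in p..q, F t) = G q - G p := fun p q =>
    intervalIntegral.integral_eq_sub_of_hasDerivAt (fun t _ => hG t) (hFc.intervalIntegrable p q)
  -- F is odd, G is even
  have hFodd : ∀ x, F (-x) = -F x := by
    intro x
    have h1 : (∫ t in (0:ℝ)..x, Φ (-t)) = ∫ t in (-x)..(-(0:ℝ)), Φ t :=
      intervalIntegral.integral_comp_neg Φ
    rw [intervalIntegral.integral_congr (fun t _ => heven t)] at h1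
    rw [hFTCPhi, neg_zero, hFTCPhi] at h1
    linarith [hF0]
  have hGeven : ∀ x, G (-x) = G x := by
    intro x
    have h1 : (∫ t in (0:ℝ)..x, F (-t)) = ∫ t in (-x)..(-(0:ℝ)), F t :=
      intervalIntegral.integral_comp_neg F
    have h2 : (∫ t in (0:ℝ)..x, F (-t)) = ∫ t in (0:ℝ)..x, -(F t) :=
      intervalIntegral.integral_congr (fun t _ => hFodd t)
    rw [h2, intervalIntegral.integral_neg, hFTCF, neg_zero, hFTCF] at h1
    linarith
  -- the key inequality for a, b > 0
  have key : ∀ a : ℝ, 0 < a → 0 ≤ deriv^[3] Φ a := by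
    intro a ha
    apply Stmt11Aux.third_deriv_nonneg Φ F G (deriv Φ) (deriv (deriv Φ)) (deriv^[3] Φ)
      hF hG hd1 hd2 hd3 hc3 a
    intro b hb
    -- derivative helpers
    have hs1ne : Real.sqrt 1 ≠ 0 := by rw [Real.sqrt_one]; norm_num
    have hAB : ∀ s : ℝ, HasDerivAt (fun s : ℝ => a + s*b) b s := fun s => by
      simpa using ((hasDerivAt_id s).mul_const b).const_add a
    have hABm : ∀ s : ℝ, HasDerivAt (fun s : ℝ => a - s*b) (-b) s := fun s => by
      simpa using HasDerivAt.const_sub a ((hasDerivAt_id s).mul_const b)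
    have hGp : ∀ s : ℝ, HasDerivAt (fun s => G (a + s*b)) (F (a + s*b) * b) s := fun s => by
      simpa [Function.comp_def] using (hG (a + s*b)).comp s (hAB s)
    have hGm : ∀ s : ℝ, HasDerivAt (fun s => G (a - s*b)) (F (a - s*b) * (-b)) s := fun s => by
      simpa [Function.comp_def] using (hG (a - s*b)).comp s (hABm s)
    have hFp : ∀ s : ℝ, HasDerivAt (fun s => F (a + s*b)) (Φ (a + s*b) * b) s := fun s => by
      simpa [Function.comp_def] using (hF (a + s*b)).comp s (hAB s)
    have hFm : ∀ s : ℝ, HasDerivAt (fun s => F (a - s*b)) (Φ (a - s*b) * (-b)) s := fun s => by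
      simpa [Function.comp_def] using (hF (a - s*b)).comp s (hABm s)
    -- P and its derivatives
    have hP1at : ∀ s : ℝ, s ≠ 0 →
        HasDerivAt (fun s => 2*(G (a + s*b) - G (a - s*b)) / s)
          ((2*b*(F (a + s*b) + F (a - s*b)) * s - 2*(G (a + s*b) - G (a - s*b))) / s^2) s := by
      intro s hs
      have hnum : HasDerivAt (fun s : ℝ => 2*(G (a + s*b) - G (a - s*b)))
          (2*(F (a + s*b) * b - F (a - s*b) * (-b))) s := ((hGp s).sub (hGm s)).const_mul 2
      have h := hnum.div (hasDerivAt_id s) hs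
      refine h.congr_deriv ?_
      simp only [id_eq]
      ring
    have hP2at : ∀ s : ℝ, s ≠ 0 →
        HasDerivAt (fun s => (2*b*(F (a + s*b) + F (a - s*b)) * s
            - 2*(G (a + s*b) - G (a - s*b))) / s^2)
          ((2*b^2*(Φ (a + s*b) - Φ (a - s*b)) * s * s^2
            - (2*b*(F (a + s*b) + F (a - s*b)) * s - 2*(G (a + s*b) - G (a - s*b))) * (2*s))
            / (s^2)^2) s := by
      intro s hs
      have hnum : HasDerivAt
          (fun s : ℝ => 2*b*(F (a + s*b) + F (a - s*b)) * s - 2*(G (a + s*b) - G (a - s*b)))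
          ((2*b*(Φ (a + s*b) * b + Φ (a - s*b) * (-b))) * s + 2*b*(F (a + s*b) + F (a - s*b)) * 1
            - 2*(F (a + s*b) * b - F (a - s*b) * (-b))) s := by
        exact ((((hFp s).add (hFm s)).const_mul (2*b)).mul (hasDerivAt_id s)).sub
          (((hGp s).sub (hGm s)).const_mul 2)
      have hden : HasDerivAt (fun s : ℝ => s^2) (2*s) s := by
        simpa using hasDerivAt_pow 2 s
      have h := hnum.div hden (pow_ne_zero 2 hs)
      refine h.congr_deriv ?_
      field_simp
      ring
    have hsq : ∀ x : ℝ, 0 < x → HasDerivAt Real.sqrt (1/(2*Real.sqrt x)) x := fun x hx =>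
      Real.hasDerivAt_sqrt hx.ne'
    -- the first derivative of K on (0,∞)
    have hKat : ∀ x : ℝ, 0 < x →
        HasDerivAt (fun x => 2*(G (a + Real.sqrt x*b) - G (a - Real.sqrt x*b)) / Real.sqrt x)
          ((2*b*(F (a + Real.sqrt x*b) + F (a - Real.sqrt x*b)) * Real.sqrt x
            - 2*(G (a + Real.sqrt x*b) - G (a - Real.sqrt x*b))) / (Real.sqrt x)^2
            / (2*Real.sqrt x)) x := by
      intro x hx
      have hsx : (0:ℝ) < Real.sqrt x := Real.sqrt_pos.2 hx
      have h := (hP1at (Real.sqrt x) hsx.ne').comp x (hsq x hx)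
      refine h.congr_deriv ?_
      field_simp
    -- the double integral equals K on (0,∞)
    have heq : ∀ x : ℝ, 0 < x →
        (∫ v in (-b)..b, ∫ u in (-a)..a, Φ (u + Real.sqrt x * v)) =
          2*(G (a + Real.sqrt x*b) - G (a - Real.sqrt x*b)) / Real.sqrt x := by
      intro x hx
      have hsx : (0:ℝ) < Real.sqrt x := Real.sqrt_pos.2 hx
      have inner : ∀ v : ℝ, (∫ u in (-a)..a, Φ (u + Real.sqrt x * v))
          = F (Real.sqrt x * v + a) - F (Real.sqrt x * v + -a) := by
        intro v
        rw [intervalIntegral.integral_comp_add_right (fun u => Φ u) (Real.sqrt x * v), hFTCPhi]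
        rw [show a + Real.sqrt x * v = Real.sqrt x * v + a by ring,
          show -a + Real.sqrt x * v = Real.sqrt x * v + -a by ring]
      rw [intervalIntegral.integral_congr (fun v _ => inner v)]
      have cont1 : Continuous (fun v : ℝ => F (Real.sqrt x * v + a)) :=
        hFc.comp (by continuity)
      have cont2 : Continuous (fun v : ℝ => F (Real.sqrt x * v + -a)) :=
        hFc.comp (by continuity)
      rw [intervalIntegral.integral_sub (cont1.intervalIntegrable _ _)
        (cont2.intervalIntegrable _ _)]
      rw [intervalIntegral.integral_comp_mul_add F hsx.ne' a,
        intervalIntegral.integral_comp_mul_add F hsx.ne' (-a), hFTCF, hFTCF]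
      rw [show Real.sqrt x * b + -a = -(a - Real.sqrt x * b) by ring, hGeven,
        show Real.sqrt x * -b + -a = -(a + Real.sqrt x * b) by ring, hGeven,
        show Real.sqrt x * -b + a = a - Real.sqrt x * b by ring,
        show Real.sqrt x * b + a = a + Real.sqrt x * b by ring]
      rw [smul_eq_mul, smul_eq_mul]
      field_simp
      ring
    -- monotonicity of the derivative on (0,∞)
    have hconv' : ConvexOn ℝ (Set.Ioi 0)
        (fun x => ∫ v in (-b)..b, ∫ u in (-a)..a, Φ (u + Real.sqrt x * v)) :=
      (hconv a b ha hb).subset (Set.Ioi_subset_Ici le_rfl) (convex_Ioi 0)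
    have hevq : ∀ x : ℝ, 0 < x →
        (fun x => ∫ v in (-b)..b, ∫ u in (-a)..a, Φ (u + Real.sqrt x * v)) =ᶠ[nhds x]
          (fun x => 2*(G (a + Real.sqrt x*b) - G (a - Real.sqrt x*b)) / Real.sqrt x) := by
      intro x hx
      exact Filter.eventuallyEq_of_mem (Ioi_mem_nhds hx) (fun y hy => heq y hy)
    have hdiffh : ∀ x ∈ Set.Ioi (0:ℝ), DifferentiableAt ℝ
        (fun x => ∫ v in (-b)..b, ∫ u in (-a)..a, Φ (u + Real.sqrt x * v)) x := by
      intro x hx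
      exact (hKat x hx).differentiableAt.congr_of_eventuallyEq (hevq x hx)
    have hmono : MonotoneOn
        (deriv (fun x => ∫ v in (-b)..b, ∫ u in (-a)..a, Φ (u + Real.sqrt x * v)))
        (Set.Ioi 0) := hconv'.monotoneOn_deriv hdiffh
    have hderiv_eq : ∀ x ∈ Set.Ioi (0:ℝ),
        deriv (fun x => ∫ v in (-b)..b, ∫ u in (-a)..a, Φ (u + Real.sqrt x * v)) x =
          (2*b*(F (a + Real.sqrt x*b) + F (a - Real.sqrt x*b)) * Real.sqrt x
            - 2*(G (a + Real.sqrt x*b) - G (a - Real.sqrt x*b))) / (Real.sqrt x)^2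
            / (2*Real.sqrt x) := by
      intro x hx
      rw [(hevq x hx).deriv_eq]
      exact (hKat x hx).deriv
    have hmono2 : MonotoneOn (fun x =>
        (2*b*(F (a + Real.sqrt x*b) + F (a - Real.sqrt x*b)) * Real.sqrt x
          - 2*(G (a + Real.sqrt x*b) - G (a - Real.sqrt x*b))) / (Real.sqrt x)^2
          / (2*Real.sqrt x)) (Set.Ioi 0) := by
      intro x hx y hy hxy
      have ex := hderiv_eq x hx
      have ey := hderiv_eq y hy
      dsimp only
      rw [← ex, ← ey]
      exact hmono hx hy hxy
    -- second derivative at 1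
    have hnum1 : HasDerivAt (fun x =>
        (2*b*(F (a + Real.sqrt x*b) + F (a - Real.sqrt x*b)) * Real.sqrt x
          - 2*(G (a + Real.sqrt x*b) - G (a - Real.sqrt x*b))) / (Real.sqrt x)^2)
        (((2*b^2*(Φ (a + Real.sqrt 1*b) - Φ (a - Real.sqrt 1*b)) * Real.sqrt 1 * (Real.sqrt 1)^2
          - (2*b*(F (a + Real.sqrt 1*b) + F (a - Real.sqrt 1*b)) * Real.sqrt 1
            - 2*(G (a + Real.sqrt 1*b) - G (a - Real.sqrt 1*b))) * (2*Real.sqrt 1))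
            / ((Real.sqrt 1)^2)^2) * (1/(2*Real.sqrt 1))) 1 :=
      (hP2at (Real.sqrt 1) hs1ne).comp 1 (hsq 1 one_pos)
    have hden1 : HasDerivAt (fun x : ℝ => 2*Real.sqrt x) (2*(1/(2*Real.sqrt 1))) 1 :=
      (hsq 1 one_pos).const_mul 2
    have hden1ne : (2:ℝ)*Real.sqrt 1 ≠ 0 := by rw [Real.sqrt_one]; norm_num
    have hK1at := hnum1.div hden1 hden1ne
    have hval := Stmt11Aux.deriv_nonneg_of_monotoneOn hmono2 one_pos hK1at
    rw [Real.sqrt_one] at hval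
    simp only [one_mul, mul_one, one_pow] at hval
    have hQval : (((2*b^2*(Φ (a + b) - Φ (a - b)) - (2*b*(F (a + b) + F (a - b))
        - 2*(G (a + b) - G (a - b))) * 2) / 1) * (1/2) * 2
        - ((2*b*(F (a + b) + F (a - b)) - 2*(G (a + b) - G (a - b))) / 1) * (2*(1/2))) / 2^2
        = (2*b^2*(Φ (a+b) - Φ (a-b)) - 6*b*(F (a+b) + F (a-b)) + 6*(G (a+b) - G (a-b))) / 4 := by
      ring
    rw [hQval] at hval
    linarith
  -- conclude: positive case + limit at 0
  intro x hx
  rcases eq_or_lt_of_le hx with rfl | hpos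
  · -- x = 0 : limit from the right
    have T : Filter.Tendsto (deriv^[3] Φ) (nhdsWithin 0 (Set.Ioi 0)) (nhds (deriv^[3] Φ 0)) :=
      (hc3.continuousAt).continuousWithinAt.tendsto
    refine ge_of_tendsto T ?_
    filter_upwards [self_mem_nhdsWithin] with y hy
    exact key y hy
  · exact key x hpos
end

section
/- Let $\Phi : \mathbb{R} \to \mathbb{R}$ be an even $C^3$ function with $\Phi'''(x) \geq 0$ for $x \geq 0$. Then the function $y \mapsto \frac{\Phi(y+1) - \Phi(y-1)}{y}$ is nondecreasing on $(0,\infty)$. -/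
open Real Set

/-- If `Φ` is an even `C³` function with `Φ''' ≥ 0` on `[0,∞)`, then
`y ↦ (Φ(y+1) - Φ(y-1))/y` is nondecreasing on `(0,∞)`. -/
theorem stmt_12 (Φ : ℝ → ℝ) (hΦ : ContDiff ℝ 3 Φ) (heven : ∀ x, Φ (-x) = Φ x)
    (hΦ''' : ∀ x : ℝ, 0 ≤ x → 0 ≤ deriv^[3] Φ x) :
    MonotoneOn (fun y => (Φ (y + 1) - Φ (y - 1)) / y) (Set.Ioi 0) := by
  -- Basic differentiability facts
  have hc2 : ContDiff ℝ 2 (deriv Φ) := by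
    have := hΦ
    rw [show (3 : WithTop ℕ∞) = 2 + 1 from rfl, contDiff_succ_iff_deriv] at this
    exact this.2.2
  have hc1 : ContDiff ℝ 1 (deriv (deriv Φ)) := by
    have := hc2
    rw [show (2 : WithTop ℕ∞) = 1 + 1 from rfl, contDiff_succ_iff_deriv] at this
    exact this.2.2
  have hd1 : Differentiable ℝ Φ := hΦ.differentiable (by norm_num)
  have hd2 : Differentiable ℝ (deriv Φ) := hc2.differentiable (by norm_num)
  have hd3 : Differentiable ℝ (deriv (deriv Φ)) := hc1.differentiable (by norm_num)
  have hiter : ∀ x, deriv^[3] Φ x = deriv (deriv (deriv Φ)) x := by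
    intro x; simp [Function.iterate_succ_apply]
  -- Φ' is odd
  have hodd : ∀ x, deriv Φ (-x) = - deriv Φ x := by
    intro x
    have : deriv (fun x => Φ (-x)) x = deriv Φ x := by
      congr 1; funext t; exact heven t
    rw [deriv_comp_neg] at this
    linarith
  -- Φ'' is even
  have heven2 : ∀ x, deriv (deriv Φ) (-x) = deriv (deriv Φ) x := by
    intro x
    have h1 : deriv (fun x => deriv Φ (-x)) x = - deriv (deriv Φ) x := by
      have : (fun x => deriv Φ (-x)) = fun x => - deriv Φ x := funext hodd
      rw [this, deriv.fun_neg]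
    rw [deriv_comp_neg] at h1
    linarith
  -- Φ'' is monotone on [0, ∞)
  have mono2 : MonotoneOn (deriv (deriv Φ)) (Ici 0) := by
    apply monotoneOn_of_deriv_nonneg (convex_Ici 0) hd3.continuous.continuousOn
      (fun x _ => (hd3 x).differentiableWithinAt)
    intro x hx
    rw [interior_Ici] at hx
    have := hΦ''' x (le_of_lt hx)
    rwa [hiter] at this
  -- derivative of shifted functions
  have hshift : ∀ (f : ℝ → ℝ), Differentiable ℝ f → ∀ y : ℝ,
      HasDerivAt (fun y => f (y + 1)) (deriv f (y + 1)) y ∧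
      HasDerivAt (fun y => f (y - 1)) (deriv f (y - 1)) y := by
    intro f hf y
    constructor
    · simpa [Function.comp_def] using (hf (y + 1)).hasDerivAt.comp y ((hasDerivAt_id y).add_const 1)
    · simpa [Function.comp_def] using (hf (y - 1)).hasDerivAt.comp y ((hasDerivAt_id y).sub_const 1)
  -- the auxiliary function h
  set h : ℝ → ℝ := fun y =>
    y * (deriv Φ (y + 1) - deriv Φ (y - 1)) - (Φ (y + 1) - Φ (y - 1)) with hh
  have hderivh : ∀ y, HasDerivAt h
      (y * (deriv (deriv Φ) (y + 1) - deriv (deriv Φ) (y - 1))) y := by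
    intro y
    have H := (((hasDerivAt_id y).fun_mul
        (((hshift (deriv Φ) hd2 y).1).fun_sub ((hshift (deriv Φ) hd2 y).2))).fun_sub
        (((hshift Φ hd1 y).1).fun_sub ((hshift Φ hd1 y).2)))
    simp only [id_eq] at H
    refine H.congr_deriv ?_
    ring
  have h0 : h 0 = 0 := by
    have := heven 1
    simp only [hh]
    norm_num
    linarith
  -- h is nonneg on [0, ∞)
  have hmono : MonotoneOn h (Ici 0) := by
    apply monotoneOn_of_deriv_nonneg (convex_Ici 0)
      (fun y _ => ((hderivh y).continuousAt).continuousWithinAt)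
      (fun y _ => ((hderivh y).differentiableAt).differentiableWithinAt)
    intro y hy
    rw [interior_Ici] at hy
    rw [(hderivh y).deriv]
    have hy0 : (0:ℝ) < y := hy
    have habs : deriv (deriv Φ) (y - 1) = deriv (deriv Φ) |y - 1| := by
      rcases abs_cases (y - 1) with ⟨h1, _⟩ | ⟨h1, _⟩
      · rw [h1]
      · rw [h1]; exact (heven2 (y - 1)).symm
    have hle : deriv (deriv Φ) (y - 1) ≤ deriv (deriv Φ) (y + 1) := by
      rw [habs]
      exact mono2 (mem_Ici.mpr (abs_nonneg _)) (mem_Ici.mpr (by linarith)) (by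
        rw [abs_le]; constructor <;> linarith)
    have : 0 ≤ deriv (deriv Φ) (y + 1) - deriv (deriv Φ) (y - 1) := by linarith
    positivity
  have hnonneg : ∀ y, 0 ≤ y → 0 ≤ h y := by
    intro y hy
    have := hmono self_mem_Ici (mem_Ici.mpr hy) hy
    linarith
  -- derivative of the main function
  have hderivg : ∀ y : ℝ, y ≠ 0 → HasDerivAt (fun y => (Φ (y + 1) - Φ (y - 1)) / y)
      (h y / y ^ 2) y := by
    intro y hy
    have H := (((hshift Φ hd1 y).1.fun_sub (hshift Φ hd1 y).2).fun_div (hasDerivAt_id y) hy)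
    refine H.congr_deriv ?_
    simp only [hh, id_eq]
    ring
  apply monotoneOn_of_deriv_nonneg (convex_Ioi 0)
  · apply ContinuousOn.div
    · exact ((hd1.continuous.comp (by continuity)).sub
        (hd1.continuous.comp (by continuity))).continuousOn
    · exact continuousOn_id
    · intro y hy; exact ne_of_gt hy
  · intro y hy
    rw [interior_Ioi] at hy
    exact (hderivg y (ne_of_gt hy)).differentiableAt.differentiableWithinAt
  · intro y hy
    rw [interior_Ioi] at hy
    rw [(hderivg y (ne_of_gt hy)).deriv]
    have := hnonneg y (le_of_lt hy)
    positivity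
end
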